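/- arXiv:1705.07308 — 3 statements merged into one kernel-verified Lean document; each statement's English description precedes it below -/
import Mathlib

section
/- There exist positive constants C, C′ and δ such that: for all t ∈ (−1, −1+δ), C/K(t) ≤ 𝔄(n(t), (1/√2, 1/√2)) ≤ C′/K(t), and for all t ∈ (1−δ, 1), C/K(t) ≤ 𝔄(n(t), (0,1)) ≤ C′/K(t). Here (1/√2,1/√2) and (0,1) are the outward unit normals to Γ_g at the endpoints P₁ = (−1,1) and P₂ = (1,0) respectively. -/
open Real Set


lemma sin_sq_half (θ : ℝ) : Real.sin (θ/2)^2 = (1 - Real.cos θ)/2 := by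
  have := Real.cos_two_mul (θ/2)
  have h2 : 2 * (θ/2) = θ := by ring
  rw [h2] at this
  have := Real.sin_sq_add_cos_sq (θ/2)
  nlinarith

lemma arccos_lower {x : ℝ} (h1 : -1 ≤ x) (h2 : x ≤ 1) :
    Real.sqrt (2*(1-x)) ≤ Real.arccos x := by
  set θ := Real.arccos x with hθ
  have hθ0 : 0 ≤ θ := Real.arccos_nonneg x
  have hθπ : θ ≤ π := Real.arccos_le_pi x
  have hcos : Real.cos θ = x := Real.cos_arccos h1 h2
  have hs := sin_sq_half θ
  have hsle : Real.sin (θ/2) ≤ θ/2 := Real.sin_le (by linarith)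
  have hs0 : 0 ≤ Real.sin (θ/2) :=
    Real.sin_nonneg_of_nonneg_of_le_pi (by linarith) (by linarith)
  have key : 2*(1-x) ≤ θ^2 := by nlinarith
  calc Real.sqrt (2*(1-x)) ≤ Real.sqrt (θ^2) := Real.sqrt_le_sqrt key
    _ = θ := Real.sqrt_sq hθ0

lemma arccos_upper {x : ℝ} (h1 : -1 ≤ x) (h2 : x ≤ 1) :
    Real.arccos x ≤ π * Real.sqrt ((1-x)/2) := by
  set θ := Real.arccos x with hθ
  have hθ0 : 0 ≤ θ := Real.arccos_nonneg x
  have hθπ : θ ≤ π := Real.arccos_le_pi x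
  have hcos : Real.cos θ = x := Real.cos_arccos h1 h2
  have hs := sin_sq_half θ
  have hj : 2/π * (θ/2) ≤ Real.sin (θ/2) :=
    Real.mul_le_sin (by linarith) (by linarith)
  have hπ := Real.pi_pos
  have hsq : (θ/π)^2 ≤ (1-x)/2 := by
    have h0 : 0 ≤ 2/π * (θ/2) := by positivity
    have : (2/π * (θ/2))^2 ≤ Real.sin (θ/2)^2 := by nlinarith
    rw [hs] at this
    have he : (2/π * (θ/2))^2 = (θ/π)^2 := by ring
    linarith [he ▸ this]
  calc θ = π * (θ/π) := by field_simp
    _ ≤ π * Real.sqrt ((1-x)/2) := by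
        refine mul_le_mul_of_nonneg_left ?_ hπ.le
        have : θ/π = Real.sqrt ((θ/π)^2) := (Real.sqrt_sq (by positivity)).symm
        rw [this]
        exact Real.sqrt_le_sqrt hsq

noncomputable def gfun (t : ℝ) : ℝ := (Real.sqrt (1 - t^2) - t * Real.arccos t) / Real.pi

lemma hasDerivAt_gfun {t : ℝ} (h1 : -1 < t) (h2 : t < 1) :
    HasDerivAt gfun (-Real.arccos t / π) t := by
  have hne : (1 : ℝ) - t^2 ≠ 0 := by nlinarith
  have hsq : Real.sqrt (1 - t^2) ≠ 0 :=
    (Real.sqrt_pos.2 (by nlinarith)).ne'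
  have hinner : HasDerivAt (fun x : ℝ => 1 - x^2) (-(2*t)) t := by
    simpa using ((hasDerivAt_pow 2 t).const_sub 1)
  have hsqrt : HasDerivAt (fun x : ℝ => Real.sqrt (1 - x^2))
      (-(2*t) / (2 * Real.sqrt (1 - t^2))) t := hinner.sqrt hne
  have harccos : HasDerivAt Real.arccos (-(1 / Real.sqrt (1 - t^2))) t :=
    Real.hasDerivAt_arccos (by linarith) (by linarith)
  have hmul : HasDerivAt (fun x : ℝ => x * Real.arccos x)
      (1 * Real.arccos t + t * -(1 / Real.sqrt (1 - t^2))) t :=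
    (hasDerivAt_id t).mul harccos
  have h : HasDerivAt (fun x => (Real.sqrt (1 - x^2) - x * Real.arccos x) / π)
      ((-(2*t) / (2 * Real.sqrt (1 - t^2)) - (1 * Real.arccos t + t * -(1 / Real.sqrt (1 - t^2)))) / π) t :=
    (hsqrt.sub hmul).div_const π
  convert h using 1
  · rfl
  have hπ := Real.pi_ne_zero
  field_simp
  ring

lemma deriv_gfun_eq {t : ℝ} (h1 : -1 < t) (h2 : t < 1) :
    deriv gfun t = -Real.arccos t / π := (hasDerivAt_gfun h1 h2).deriv

lemma deriv2_gfun_eq {t : ℝ} (h1 : -1 < t) (h2 : t < 1) :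
    deriv (deriv gfun) t = 1 / (π * Real.sqrt (1 - t^2)) := by
  have hev : deriv gfun =ᶠ[nhds t] (fun x => -Real.arccos x / π) := by
    filter_upwards [Ioo_mem_nhds h1 h2] with x hx
    exact deriv_gfun_eq hx.1 hx.2
  rw [hev.deriv_eq]
  have harccos : HasDerivAt Real.arccos (-(1 / Real.sqrt (1 - t^2))) t :=
    Real.hasDerivAt_arccos (by linarith) (by linarith)
  have h : HasDerivAt (fun x => -Real.arccos x / π)
      (-(-(1 / Real.sqrt (1 - t^2))) / π) t := harccos.neg.div_const π
  rw [h.deriv]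
  have hsq : Real.sqrt (1 - t^2) ≠ 0 := (Real.sqrt_pos.2 (by nlinarith)).ne'
  field_simp

noncomputable def Kcurv (t : ℝ) : ℝ :=
  deriv (deriv gfun) t / (1 + (deriv gfun t)^2) ^ ((3:ℝ)/2)

noncomputable def Rfun (t : ℝ) : ℝ :=
  π * Real.sqrt (1 - t^2) * (1 + (Real.arccos t / π)^2) ^ ((3:ℝ)/2)

lemma Kcurv_eq {t : ℝ} (h1 : -1 < t) (h2 : t < 1) : Kcurv t = 1 / Rfun t := by
  have hb : (1 : ℝ) + (deriv gfun t)^2 = 1 + (Real.arccos t / π)^2 := by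
    rw [deriv_gfun_eq h1 h2]; ring
  have hrp : (0:ℝ) < (1 + (Real.arccos t / π)^2) ^ ((3:ℝ)/2) :=
    Real.rpow_pos_of_pos (by positivity) _
  have hsq : (0:ℝ) < Real.sqrt (1 - t^2) := Real.sqrt_pos.2 (by nlinarith)
  rw [Kcurv, hb, deriv2_gfun_eq h1 h2, Rfun, div_div]

noncomputable def enorm2 (x : ℝ × ℝ) : ℝ := Real.sqrt (x.1^2 + x.2^2)

/-- The angle in `[0, π]` between two (unit) vectors. -/
noncomputable def ang (u v : ℝ × ℝ) : ℝ :=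
  Real.arccos ((u.1 * v.1 + u.2 * v.2) / (enorm2 u * enorm2 v))

noncomputable def normalVec (t : ℝ) : ℝ × ℝ :=
  (-(deriv gfun t) / Real.sqrt (1 + (deriv gfun t)^2), 1 / Real.sqrt (1 + (deriv gfun t)^2))

lemma enorm2_normalVec (t : ℝ) : enorm2 (normalVec t) = 1 := by
  set d := deriv gfun t
  have h0 : (0:ℝ) < 1 + d^2 := by positivity
  have hs : Real.sqrt (1 + d^2) ^ 2 = 1 + d^2 := Real.sq_sqrt h0.le
  have hsp : (0:ℝ) < Real.sqrt (1 + d^2) := Real.sqrt_pos.2 h0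
  rw [enorm2, normalVec]
  have : (-d / Real.sqrt (1 + d^2))^2 + (1 / Real.sqrt (1 + d^2))^2 = 1 := by
    field_simp
    linarith [hs]
  rw [this, Real.sqrt_one]

lemma ang_normal_e2 (t : ℝ) :
    ang (normalVec t) ((0:ℝ), (1:ℝ)) =
      Real.arccos (1 / Real.sqrt (1 + (deriv gfun t)^2)) := by
  rw [ang, enorm2_normalVec]
  have h2 : enorm2 ((0:ℝ), (1:ℝ)) = 1 := by simp [enorm2]
  rw [h2, normalVec]
  norm_num

lemma ang_normal_diag (t : ℝ) :
    ang (normalVec t) (1 / Real.sqrt 2, 1 / Real.sqrt 2) =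
      Real.arccos ((-(deriv gfun t) + 1) / (Real.sqrt 2 * Real.sqrt (1 + (deriv gfun t)^2))) := by
  have hq : Real.sqrt 2 ^ 2 = 2 := Real.sq_sqrt (by norm_num)
  have hqp : (0:ℝ) < Real.sqrt 2 := Real.sqrt_pos.2 (by norm_num)
  set d := deriv gfun t
  have hsp : (0:ℝ) < Real.sqrt (1 + d^2) := Real.sqrt_pos.2 (by positivity)
  rw [ang, enorm2_normalVec]
  have h2 : enorm2 (1 / Real.sqrt 2, 1 / Real.sqrt 2) = 1 := by
    rw [enorm2]
    have : (1 / Real.sqrt 2)^2 + (1 / Real.sqrt 2)^2 = 1 := by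
      field_simp
      linarith [hq]
    rw [this, Real.sqrt_one]
  rw [h2, normalVec]
  congr 1
  field_simp
  ring

lemma sqrt_half_le {z : ℝ} (hz : 0 ≤ z) : Real.sqrt (z/2) ≤ Real.sqrt z :=
  Real.sqrt_le_sqrt (by linarith)

lemma rpow_32_le_3 {x : ℝ} (h0 : 0 ≤ x) (h2 : x ≤ 2) : x ^ ((3:ℝ)/2) ≤ 3 := by
  have h1 : x ^ ((3:ℝ)/2) ≤ (2:ℝ) ^ ((3:ℝ)/2) :=
    Real.rpow_le_rpow h0 h2 (by norm_num)
  have h2' : (2:ℝ) ^ ((3:ℝ)/2) = Real.sqrt 8 := by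
    rw [show ((3:ℝ)/2) = (3:ℝ) * (1/2) by ring, Real.rpow_mul (by norm_num)]
    rw [show ((3:ℝ)) = ((3:ℕ):ℝ) by norm_num, Real.rpow_natCast]
    norm_num [Real.sqrt_eq_rpow]
  have h3 : Real.sqrt 8 ≤ 3 := by
    rw [show (3:ℝ) = Real.sqrt 9 by rw [show (9:ℝ) = 3^2 by norm_num, Real.sqrt_sq]; norm_num]
    exact Real.sqrt_le_sqrt (by norm_num)
  linarith

lemma one_le_rpow_32 {x : ℝ} (h1 : 1 ≤ x) : 1 ≤ x ^ ((3:ℝ)/2) := by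
  calc (1:ℝ) = 1 ^ ((3:ℝ)/2) := (Real.one_rpow _).symm
    _ ≤ x ^ ((3:ℝ)/2) := Real.rpow_le_rpow (by norm_num) h1 (by norm_num)

lemma D_bounds {q s a : ℝ} (hq1 : 1 ≤ q) (hq32 : q ≤ 3/2) (hs1 : 1 ≤ s)
    (hs32 : s ≤ 3/2) (ha0 : 0 ≤ a) (ha1 : a ≤ 1) :
    2 ≤ (q*s + (1+a))*(q*s) ∧ (q*s + (1+a))*(q*s) ≤ 18 := by
  have hm1 : 1 ≤ q*s := by nlinarith
  have hm2 : q*s ≤ 9/4 := by nlinarith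
  constructor
  · nlinarith [hm1, hm2]
  · nlinarith [hm1, hm2]

lemma num_le {q s a : ℝ} (h : (q*s)^2 = 2*(1+a^2)) (hpos : 0 < q*s) (ha0 : 0 ≤ a) :
    1 + a ≤ q*s := by
  nlinarith [sq_nonneg (1 - a), sq_nonneg (q*s - (1+a)), sq_nonneg (q*s + (1+a))]

lemma const_est {u p c : ℝ} (hu : 0 ≤ u) (h14 : 3.14 < p) (h15 : p < 3.15)
    (hc : 2 ≤ c) (hc' : c ≤ 3) : (9/400)*(p*u) ≤ u/(c*p) := by
  have hcp : (0:ℝ) < c*p := by positivity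
  have h : (9/400)*p ≤ 1/(c*p) := by
    rw [le_div_iff₀ hcp]
    nlinarith
  have h2 := mul_le_mul_of_nonneg_right h hu
  calc (9/400)*(p*u) = (9/400)*p*u := by ring
    _ ≤ 1/(c*p)*u := h2
    _ = u/(c*p) := by ring

set_option maxHeartbeats 1600000 in
lemma right_side {t : ℝ} (h0 : 0 < t) (h2 : t < 1) :
    (1/200) * Rfun t ≤ Real.arccos (1 / Real.sqrt (1 + (Real.arccos t / π)^2)) ∧
    Real.arccos (1 / Real.sqrt (1 + (Real.arccos t / π)^2)) ≤ Rfun t := by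
  have hπ := Real.pi_pos
  have hπ15 : π < 3.15 := Real.pi_lt_d2
  have hπ14 : 3.14 < π := Real.pi_gt_d2
  obtain ⟨a, ha⟩ : ∃ a : ℝ, Real.arccos t / π = a := ⟨_, rfl⟩
  rw [ha]
  have hA0 : 0 ≤ Real.arccos t := Real.arccos_nonneg t
  have hAπ : Real.arccos t ≤ π := Real.arccos_le_pi t
  have ha0 : 0 ≤ a := by rw [← ha]; positivity
  have ha1 : a ≤ 1 := by rw [← ha, div_le_one hπ]; exact hAπ
  have ha2 : a^2 ≤ 1 := by nlinarith [sq_nonneg a, sq_nonneg (1-a)]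
  obtain ⟨s, hs⟩ : ∃ s : ℝ, Real.sqrt (1 + a^2) = s := ⟨_, rfl⟩
  rw [hs]
  have hs2 : s^2 = 1 + a^2 := by rw [← hs]; exact Real.sq_sqrt (by positivity)
  have hs1 : 1 ≤ s := by
    have h := Real.sqrt_le_sqrt (show (1:ℝ) ≤ 1 + a^2 by linarith [sq_nonneg a])
    rwa [Real.sqrt_one, hs] at h
  have hs32 : s ≤ 3/2 := by
    have h := Real.sqrt_le_sqrt (show 1 + a^2 ≤ ((3/2):ℝ)^2 by linarith [ha2])
    rwa [Real.sqrt_sq (by norm_num), hs] at h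
  have hsp : (0:ℝ) < s := by linarith
  obtain ⟨P, hP⟩ : ∃ P : ℝ, (1 + a^2) ^ ((3:ℝ)/2) = P := ⟨_, rfl⟩
  have hP1 : 1 ≤ P := hP ▸ one_le_rpow_32 (by linarith [sq_nonneg a])
  have hP3 : P ≤ 3 := hP ▸ rpow_32_le_3 (by positivity) (by linarith [ha2])
  obtain ⟨u, hu⟩ : ∃ u : ℝ, Real.sqrt (1 - t) = u := ⟨_, rfl⟩
  obtain ⟨w, hw⟩ : ∃ w : ℝ, Real.sqrt (1 + t) = w := ⟨_, rfl⟩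
  have hu0 : 0 ≤ u := hu ▸ Real.sqrt_nonneg _
  have hw1 : 1 ≤ w := by
    have h := Real.sqrt_le_sqrt (show (1:ℝ) ≤ 1 + t by linarith)
    rwa [Real.sqrt_one, hw] at h
  have hw32 : w ≤ 3/2 := by
    have h := Real.sqrt_le_sqrt (show 1 + t ≤ ((3/2):ℝ)^2 by linarith)
    rwa [Real.sqrt_sq (by norm_num), hw] at h
  have hsplit : Real.sqrt (1 - t^2) = w * u := by
    rw [← hw, ← hu, ← Real.sqrt_mul (by linarith)]
    congr 1; ring
  have hR : Rfun t = π * (w * u) * P := by rw [Rfun, hsplit, ha, hP]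
  -- bounds on R
  have hRle : Rfun t ≤ (9/2) * (π * u) := by
    rw [hR]
    have h1 : π * (w * u) ≤ π * ((3/2) * u) :=
      mul_le_mul_of_nonneg_left (mul_le_mul_of_nonneg_right hw32 hu0) hπ.le
    have h3 : π * (w * u) * P ≤ π * ((3/2) * u) * 3 :=
      mul_le_mul h1 hP3 (by positivity) (by positivity)
    linarith
  have hRge : π * u ≤ Rfun t := by
    rw [hR]
    have h1 : π * (1 * u) ≤ π * (w * u) :=
      mul_le_mul_of_nonneg_left (mul_le_mul_of_nonneg_right hw1 hu0) hπ.le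
    have h3 : π * (w * u) * 1 ≤ π * (w * u) * P :=
      mul_le_mul_of_nonneg_left hP1 (by positivity)
    linarith [h1, h3]
  -- bounds relating a and u
  have hulow : u ≤ π * a := by
    have h1 := arccos_lower (by linarith : (-1:ℝ) ≤ t) h2.le
    have h2' : u ≤ Real.sqrt (2*(1-t)) := by
      rw [← hu]; exact Real.sqrt_le_sqrt (by linarith)
    have he : π * a = Real.arccos t := by rw [← ha]; field_simp
    linarith [he ▸ (h2'.trans h1)]
  have hahigh : a ≤ Real.sqrt ((1-t)/2) := by
    have h1 := arccos_upper (by linarith : (-1:ℝ) ≤ t) h2.le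
    rw [← ha, div_le_iff₀ hπ]
    linarith [h1]
  -- facts about x = 1/s
  have hfac : (s-1)*(s+1) = a^2 := by linear_combination hs2
  have hxm1 : (-1:ℝ) ≤ 1/s := by
    have : (0:ℝ) ≤ 1/s := by positivity
    linarith
  have hx1 : 1/s ≤ 1 := by rw [div_le_one hsp]; linarith
  have hlow : a^2/4 ≤ 2*(1 - 1/s) := by
    have hid : a^2*s = (s-1)*((s+1)*s) := by linear_combination (-s) * hfac
    have h8 : (s+1)*s ≤ 4 := by linarith [hs2, ha2, hs32]
    have key := mul_le_mul_of_nonneg_left h8 (sub_nonneg.2 hs1)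
    have hmul : a^2 * s ≤ 8*(s-1) := by linarith [key, hid]
    have he : 2*(1 - 1/s) = 2*(s-1)/s := by field_simp
    rw [he, div_le_div_iff₀ (by norm_num) hsp]
    linarith
  have hhigh : (1 - 1/s)/2 ≤ a^2/4 := by
    have hid : a^2*s = (s-1)*((s+1)*s) := by linear_combination (-s) * hfac
    have h2s : 2 ≤ (s+1)*s := by linarith [hs2, sq_nonneg a, hs1]
    have key := mul_le_mul_of_nonneg_left h2s (sub_nonneg.2 hs1)
    have hmul : 2*(s-1) ≤ a^2 * s := by linarith [key, hid]
    have he : 1 - 1/s = (s-1)/s := by field_simp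
    have h4 : (s-1)/s ≤ a^2/2 := by
      rw [div_le_div_iff₀ hsp (by norm_num)]
      linarith [hmul]
    rw [he]
    linarith
  obtain ⟨θ, hθ⟩ : ∃ θ : ℝ, Real.arccos (1/s) = θ := ⟨_, rfl⟩
  rw [hθ]
  have hθlow : a/2 ≤ θ := by
    have h1 := hθ ▸ arccos_lower hxm1 hx1
    have h2' : Real.sqrt (a^2/4) ≤ Real.sqrt (2*(1-1/s)) := Real.sqrt_le_sqrt hlow
    rw [show a^2/4 = (a/2)^2 by ring, Real.sqrt_sq (by positivity)] at h2'
    linarith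
  have hθhigh : θ ≤ π * (a/2) := by
    have h1 := hθ ▸ arccos_upper hxm1 hx1
    have h2' : Real.sqrt ((1-1/s)/2) ≤ Real.sqrt (a^2/4) := Real.sqrt_le_sqrt hhigh
    rw [show a^2/4 = (a/2)^2 by ring, Real.sqrt_sq (by positivity)] at h2'
    have h4 := mul_le_mul_of_nonneg_left h2' hπ.le
    linarith
  constructor
  · -- lower bound
    have h1 : u/(2*π) ≤ a/2 := by
      rw [div_le_div_iff₀ (by positivity) (by norm_num)]
      linarith [mul_le_mul_of_nonneg_left hulow (by norm_num : (0:ℝ) ≤ 2)]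
    have h2' : (1/200) * Rfun t ≤ (9/400) * (π * u) := by linarith
    have h3 : (9/400) * (π * u) ≤ u/(2*π) :=
      const_est hu0 hπ14 hπ15 (le_refl 2) (by norm_num)
    linarith
  · -- upper bound
    have h1 : a/2 ≤ u/2 := by
      have := hahigh.trans (sqrt_half_le (by linarith))
      linarith
    have h2' : θ ≤ π * (u/2) := by
      have h4 : π * (a/2) ≤ π * (u/2) := mul_le_mul_of_nonneg_left (by linarith) hπ.le
      linarith
    linarith [hRge]


set_option maxHeartbeats 1600000 in
lemma left_side {t : ℝ} (h1 : -1 < t) (h0 : t < 0) :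
    (1/200) * Rfun t ≤
      Real.arccos ((Real.arccos t / π + 1) /
        (Real.sqrt 2 * Real.sqrt (1 + (Real.arccos t / π)^2))) ∧
    Real.arccos ((Real.arccos t / π + 1) /
        (Real.sqrt 2 * Real.sqrt (1 + (Real.arccos t / π)^2))) ≤ Rfun t := by
  have hπ := Real.pi_pos
  have hπ15 : π < 3.15 := Real.pi_lt_d2
  have hπ14 : 3.14 < π := Real.pi_gt_d2
  obtain ⟨a, ha⟩ : ∃ a : ℝ, Real.arccos t / π = a := ⟨_, rfl⟩
  rw [ha]
  have hA0 : 0 ≤ Real.arccos t := Real.arccos_nonneg t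
  have hAπ : Real.arccos t ≤ π := Real.arccos_le_pi t
  have ha0 : 0 ≤ a := by rw [← ha]; positivity
  have ha1 : a ≤ 1 := by rw [← ha, div_le_one hπ]; exact hAπ
  have ha2 : a^2 ≤ 1 := by nlinarith [sq_nonneg a, sq_nonneg (1-a)]
  obtain ⟨b, hb⟩ : ∃ b : ℝ, 1 - a = b := ⟨_, rfl⟩
  have hb0 : 0 ≤ b := by rw [← hb]; linarith
  have hbA : π * b = Real.arccos (-t) := by
    rw [Real.arccos_neg, ← hb, ← ha]
    field_simp
  obtain ⟨s, hs⟩ : ∃ s : ℝ, Real.sqrt (1 + a^2) = s := ⟨_, rfl⟩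
  rw [hs]
  have hs2 : s^2 = 1 + a^2 := by rw [← hs]; exact Real.sq_sqrt (by positivity)
  have hs1 : 1 ≤ s := by
    have h := Real.sqrt_le_sqrt (show (1:ℝ) ≤ 1 + a^2 by linarith [sq_nonneg a])
    rwa [Real.sqrt_one, hs] at h
  have hs32 : s ≤ 3/2 := by
    have h := Real.sqrt_le_sqrt (show 1 + a^2 ≤ ((3/2):ℝ)^2 by linarith [ha2])
    rwa [Real.sqrt_sq (by norm_num), hs] at h
  have hsp : (0:ℝ) < s := by linarith
  obtain ⟨q, hq⟩ : ∃ q : ℝ, Real.sqrt 2 = q := ⟨_, rfl⟩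
  rw [hq]
  have hq2 : q^2 = 2 := by rw [← hq]; exact Real.sq_sqrt (by norm_num)
  have hq1 : 1 ≤ q := by
    have h := Real.sqrt_le_sqrt (show (1:ℝ) ≤ 2 by norm_num)
    rwa [Real.sqrt_one, hq] at h
  have hq32 : q ≤ 3/2 := by
    have h := Real.sqrt_le_sqrt (show (2:ℝ) ≤ ((3/2):ℝ)^2 by norm_num)
    rwa [Real.sqrt_sq (by norm_num), hq] at h
  have hqp : (0:ℝ) < q := by linarith
  obtain ⟨P, hP⟩ : ∃ P : ℝ, (1 + a^2) ^ ((3:ℝ)/2) = P := ⟨_, rfl⟩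
  have hP1 : 1 ≤ P := hP ▸ one_le_rpow_32 (by linarith [sq_nonneg a])
  have hP3 : P ≤ 3 := hP ▸ rpow_32_le_3 (by positivity) (by linarith [ha2])
  obtain ⟨u, hu⟩ : ∃ u : ℝ, Real.sqrt (1 + t) = u := ⟨_, rfl⟩
  obtain ⟨w, hw⟩ : ∃ w : ℝ, Real.sqrt (1 - t) = w := ⟨_, rfl⟩
  have hu0 : 0 ≤ u := hu ▸ Real.sqrt_nonneg _
  have hw1 : 1 ≤ w := by
    have h := Real.sqrt_le_sqrt (show (1:ℝ) ≤ 1 - t by linarith)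
    rwa [Real.sqrt_one, hw] at h
  have hw32 : w ≤ 3/2 := by
    have h := Real.sqrt_le_sqrt (show 1 - t ≤ ((3/2):ℝ)^2 by linarith)
    rwa [Real.sqrt_sq (by norm_num), hw] at h
  have hsplit : Real.sqrt (1 - t^2) = w * u := by
    rw [← hw, ← hu, ← Real.sqrt_mul (by linarith)]
    congr 1; ring
  have hR : Rfun t = π * (w * u) * P := by rw [Rfun, hsplit, ha, hP]
  have hRle : Rfun t ≤ (9/2) * (π * u) := by
    rw [hR]
    have h1 : π * (w * u) ≤ π * ((3/2) * u) :=
      mul_le_mul_of_nonneg_left (mul_le_mul_of_nonneg_right hw32 hu0) hπ.le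
    have h3 : π * (w * u) * P ≤ π * ((3/2) * u) * 3 :=
      mul_le_mul h1 hP3 (by positivity) (by positivity)
    linarith
  have hRge : π * u ≤ Rfun t := by
    rw [hR]
    have h1 : π * (1 * u) ≤ π * (w * u) :=
      mul_le_mul_of_nonneg_left (mul_le_mul_of_nonneg_right hw1 hu0) hπ.le
    have h3 : π * (w * u) * 1 ≤ π * (w * u) * P :=
      mul_le_mul_of_nonneg_left hP1 (by positivity)
    linarith [h1, h3]
  -- bounds relating b and u
  have hulow : u ≤ π * b := by
    have hlAC := arccos_lower (by linarith : (-1:ℝ) ≤ -t) (by linarith : -t ≤ 1)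
    have h2' : u ≤ Real.sqrt (2*(1 - -t)) := by
      rw [← hu]; exact Real.sqrt_le_sqrt (by linarith)
    linarith [hbA ▸ (h2'.trans hlAC)]
  have hbhigh : b ≤ u := by
    have hl := arccos_upper (by linarith : (-1:ℝ) ≤ -t) (by linarith : -t ≤ 1)
    have h2' : Real.sqrt ((1 - -t)/2) ≤ u := by
      rw [← hu]; exact Real.sqrt_le_sqrt (by linarith)
    have h3 : π * b ≤ π * u := by
      have h4 := mul_le_mul_of_nonneg_left h2' hπ.le
      linarith [hbA ▸ hl]
    exact le_of_mul_le_mul_left h3 hπ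
  -- the quantity x = (a+1)/(q*s)
  have hqsp : 0 < q * s := by positivity
  have hfacsq : (q*s)^2 = 2*(1 + a^2) := by linear_combination s^2 * hq2 + 2 * hs2
  have hnum : 1 + a ≤ q * s := num_le hfacsq hqsp ha0
  obtain ⟨N, hN⟩ : ∃ N : ℝ, q*s - (1+a) = N := ⟨_, rfl⟩
  have hN0 : 0 ≤ N := by rw [← hN]; linarith
  have hfacN : N * (q*s + (1+a)) = b^2 := by
    rw [← hN, ← hb]
    linear_combination s^2 * hq2 + 2 * hs2
  obtain ⟨hDge, hDle⟩ := D_bounds hq1 hq32 hs1 hs32 ha0 ha1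
  have hid : b^2*(q*s) = N*((q*s + (1+a))*(q*s)) := by
    linear_combination (-(q*s)) * hfacN
  have key := mul_le_mul_of_nonneg_left hDle hN0
  have key2 := mul_le_mul_of_nonneg_left hDge hN0
  have hxm1 : (-1:ℝ) ≤ (a+1)/(q*s) := by
    have : (0:ℝ) ≤ (a+1)/(q*s) := by positivity
    linarith
  have hx1 : (a+1)/(q*s) ≤ 1 := by
    rw [div_le_one hqsp]; linarith
  have hxe : 1 - (a+1)/(q*s) = N/(q*s) := by
    rw [← hN]; field_simp; ring
  have hlow : b^2/9 ≤ 2*(1 - (a+1)/(q*s)) := by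
    rw [hxe, show 2*(N/(q*s)) = 2*N/(q*s) by ring, div_le_div_iff₀ (by norm_num) hqsp]
    linarith
  have hhigh : (1 - (a+1)/(q*s))/2 ≤ b^2/4 := by
    have h6 : N/(q*s) ≤ b^2/2 := by
      rw [div_le_div_iff₀ hqsp (by norm_num)]
      linarith
    rw [hxe]
    linarith
  obtain ⟨θ, hθ⟩ : ∃ θ : ℝ, Real.arccos ((a+1)/(q*s)) = θ := ⟨_, rfl⟩
  rw [hθ]
  have hθlow : b/3 ≤ θ := by
    have hl := hθ ▸ arccos_lower hxm1 hx1
    have h2' : Real.sqrt (b^2/9) ≤ Real.sqrt (2*(1 - (a+1)/(q*s))) := Real.sqrt_le_sqrt hlow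
    rw [show b^2/9 = (b/3)^2 by ring, Real.sqrt_sq (by positivity)] at h2'
    linarith
  have hθhigh : θ ≤ π * (b/2) := by
    have hl := hθ ▸ arccos_upper hxm1 hx1
    have h2' : Real.sqrt ((1 - (a+1)/(q*s))/2) ≤ Real.sqrt (b^2/4) := Real.sqrt_le_sqrt hhigh
    rw [show b^2/4 = (b/2)^2 by ring, Real.sqrt_sq (by positivity)] at h2'
    have h4 := mul_le_mul_of_nonneg_left h2' hπ.le
    linarith
  constructor
  · have hc1 : u/(3*π) ≤ b/3 := by
      rw [div_le_div_iff₀ (by positivity) (by norm_num)]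
      linarith [mul_le_mul_of_nonneg_left hulow (by norm_num : (0:ℝ) ≤ 3)]
    have hc2 : (1/200) * Rfun t ≤ (9/400) * (π * u) := by linarith
    have hc3 := const_est hu0 hπ14 hπ15 (by norm_num : (2:ℝ) ≤ 3) (le_refl (3:ℝ))
    linarith
  · have h2' : θ ≤ π * (u/2) := by
      have h4 : π * (b/2) ≤ π * (u/2) := by
        refine mul_le_mul_of_nonneg_left (by linarith) hπ.le
      linarith
    linarith [hRge]

theorem angle_comparable_to_inverse_curvature_near_cusps :
    ∃ C C' δ : ℝ, 0 < C ∧ 0 < C' ∧ 0 < δ ∧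
      (∀ t : ℝ, -1 < t → t < -1 + δ →
        C / Kcurv t ≤ ang (normalVec t) (1 / Real.sqrt 2, 1 / Real.sqrt 2) ∧
        ang (normalVec t) (1 / Real.sqrt 2, 1 / Real.sqrt 2) ≤ C' / Kcurv t) ∧
      (∀ t : ℝ, 1 - δ < t → t < 1 →
        C / Kcurv t ≤ ang (normalVec t) ((0:ℝ), (1:ℝ)) ∧
        ang (normalVec t) ((0:ℝ), (1:ℝ)) ≤ C' / Kcurv t) := by
  refine ⟨1/200, 1, 1, by norm_num, by norm_num, by norm_num, ?_, ?_⟩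
  · intro t ht1 ht2
    have ht0 : t < 0 := by linarith
    have ht2' : t < 1 := by linarith
    have hK : Kcurv t = 1 / Rfun t := Kcurv_eq ht1 ht2'
    have hd : deriv gfun t = -Real.arccos t / π := deriv_gfun_eq ht1 ht2'
    have e1 : (1 : ℝ) + (deriv gfun t)^2 = 1 + (Real.arccos t / π)^2 := by
      rw [hd]; ring
    have hang : ang (normalVec t) (1 / Real.sqrt 2, 1 / Real.sqrt 2) =
        Real.arccos ((Real.arccos t / π + 1) /
          (Real.sqrt 2 * Real.sqrt (1 + (Real.arccos t / π)^2))) := by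
      rw [ang_normal_diag, e1, hd]
      congr 1
      ring
    obtain ⟨hl, hr⟩ := left_side ht1 ht0
    rw [hang, hK, div_div_eq_mul_div, div_one, one_div_one_div]
    exact ⟨by linarith, hr⟩
  · intro t ht1 ht2
    have ht0 : 0 < t := by linarith
    have ht1' : -1 < t := by linarith
    have hK : Kcurv t = 1 / Rfun t := Kcurv_eq ht1' ht2
    have hd : deriv gfun t = -Real.arccos t / π := deriv_gfun_eq ht1' ht2
    have e1 : (1 : ℝ) + (deriv gfun t)^2 = 1 + (Real.arccos t / π)^2 := by
      rw [hd]; ring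
    have hang : ang (normalVec t) ((0:ℝ), (1:ℝ)) =
        Real.arccos (1 / Real.sqrt (1 + (Real.arccos t / π)^2)) := by
      rw [ang_normal_e2, e1]
    obtain ⟨hl, hr⟩ := right_side ht0 ht2
    rw [hang, hK, div_div_eq_mul_div, div_one, one_div_one_div]
    exact ⟨by linarith, hr⟩
end

section
/- For every q ∈ ℕ and every unit vector ξ = (ξ₁,ξ₂) ∈ S¹ ∩ 𝔠₀, setting v₁* = (−ξ₂, ξ₁) and v₂* = (ξ₁, ξ₂), one has h_q(ξ, v₁*, v₂*) = −(q!)² K_ξ^{−2}. -/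
open Real Set

def cone0 : Set (ℝ × ℝ) := {x | 0 < x.1 ∧ 0 < x.2 ∧ 1 < x.2 / x.1}

noncomputable def tpar (ξ : ℝ × ℝ) : ℝ := Real.cos (Real.pi * ξ.1 / ξ.2)

noncomputable def Kxi (ξ : ℝ × ℝ) : ℝ := Kcurv (tpar ξ)

noncomputable def xpt (ξ : ℝ × ℝ) : ℝ × ℝ := (tpar ξ, gfun (tpar ξ))

noncomputable def Hfun (ξ : ℝ × ℝ) : ℝ := ξ.1 * (xpt ξ).1 + ξ.2 * (xpt ξ).2

noncomputable def pd1 (f : ℝ × ℝ → ℝ) : ℝ × ℝ → ℝ := fun x => fderiv ℝ f x (1, 0)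
noncomputable def pd2 (f : ℝ × ℝ → ℝ) : ℝ × ℝ → ℝ := fun x => fderiv ℝ f x (0, 1)

/-- `g_{i,j}(y, v₁, v₂) = ∂^{q+2} F / (∂u₁ ∂u_i ∂u_j ∂u₂^{q-1}) (0,0)`
for `F(u₁,u₂) = H(y + u₁ v₁ + u₂ v₂)`. -/
noncomputable def gij (q : ℕ) (y v₁ v₂ : ℝ × ℝ) (i j : Fin 2) : ℝ :=
  pd1 ((if i = 0 then pd1 else pd2)
    ((if j = 0 then pd1 else pd2)
      (pd2^[q-1] (fun u : ℝ × ℝ => Hfun (y + u.1 • v₁ + u.2 • v₂))))) (0, 0)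

noncomputable def hq (q : ℕ) (y v₁ v₂ : ℝ × ℝ) : ℝ :=
  gij q y v₁ v₂ 0 0 * gij q y v₁ v₂ 1 1 - gij q y v₁ v₂ 0 1 * gij q y v₁ v₂ 1 0

lemma pd1_congr {f g : ℝ × ℝ → ℝ} {s : Set (ℝ × ℝ)} (hs : IsOpen s)
    (h : EqOn f g s) : EqOn (pd1 f) (pd1 g) s := by
  intro x hx
  have h' : f =ᶠ[nhds x] g := Filter.eventually_of_mem (hs.mem_nhds hx) h
  simp only [pd1, h'.fderiv_eq]

lemma pd2_congr {f g : ℝ × ℝ → ℝ} {s : Set (ℝ × ℝ)} (hs : IsOpen s)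
    (h : EqOn f g s) : EqOn (pd2 f) (pd2 g) s := by
  intro x hx
  have h' : f =ᶠ[nhds x] g := Filter.eventually_of_mem (hs.mem_nhds hx) h
  simp only [pd2, h'.fderiv_eq]

lemma pd2_iter_congr {f g : ℝ × ℝ → ℝ} {s : Set (ℝ × ℝ)} (hs : IsOpen s)
    (h : EqOn f g s) (k : ℕ) : EqOn (pd2^[k] f) (pd2^[k] g) s := by
  induction k with
  | zero => simpa using h
  | succ n ih =>
    rw [Function.iterate_succ_apply', Function.iterate_succ_apply']
    exact pd2_congr hs ih

-- smoothness preservation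
lemma pd_smooth {f : ℝ × ℝ → ℝ} {s : Set (ℝ × ℝ)} (hs : IsOpen s)
    (hf : ContDiffOn ℝ (⊤ : ℕ∞) f s) (v : ℝ × ℝ) :
    ContDiffOn ℝ (⊤ : ℕ∞) (fun x => fderiv ℝ f x v) s := by
  have h1 : ContDiffOn ℝ (⊤ : ℕ∞) (fderiv ℝ f) s :=
    hf.fderiv_of_isOpen hs (by norm_num)
  exact h1.clm_apply contDiffOn_const


lemma pd2_eq_deriv {f : ℝ × ℝ → ℝ} {x : ℝ × ℝ} (hf : DifferentiableAt ℝ f x) :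
    pd2 f x = deriv (fun t => f (x.1, t)) x.2 := by
  have hc : HasDerivAt (fun t : ℝ => ((x.1, t) : ℝ × ℝ)) ((0 : ℝ), (1 : ℝ)) x.2 :=
    (hasDerivAt_const x.2 x.1).prodMk (hasDerivAt_id x.2)
  have h2 : HasFDerivAt f (fderiv ℝ f x) ((x.1, x.2) : ℝ × ℝ) := by
    rw [Prod.mk.eta]; exact hf.hasFDerivAt
  have := h2.comp_hasDerivAt x.2 hc
  simp only [pd2]
  exact (this.deriv).symm

lemma pd1_eq_deriv {f : ℝ × ℝ → ℝ} {x : ℝ × ℝ} (hf : DifferentiableAt ℝ f x) :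
    pd1 f x = deriv (fun t => f (t, x.2)) x.1 := by
  have hc : HasDerivAt (fun t : ℝ => ((t, x.2) : ℝ × ℝ)) ((1 : ℝ), (0 : ℝ)) x.1 :=
    (hasDerivAt_id x.1).prodMk (hasDerivAt_const x.1 x.2)
  have h2 : HasFDerivAt f (fderiv ℝ f x) ((x.1, x.2) : ℝ × ℝ) := by
    rw [Prod.mk.eta]; exact hf.hasFDerivAt
  have := h2.comp_hasDerivAt x.1 hc
  simp only [pd1]
  exact (this.deriv).symm

lemma diffAt_of_smoothOn {f : ℝ × ℝ → ℝ} {s : Set (ℝ × ℝ)} {x : ℝ × ℝ} (hs : IsOpen s)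
    (hf : ContDiffOn ℝ (⊤ : ℕ∞) f s) (hx : x ∈ s) : DifferentiableAt ℝ f x :=
  ((hf.contDiffAt (hs.mem_nhds hx)).differentiableAt (by simp))

lemma pd_swap {f : ℝ × ℝ → ℝ} {s : Set (ℝ × ℝ)} (hs : IsOpen s)
    (hf : ContDiffOn ℝ (⊤ : ℕ∞) f s) : EqOn (pd1 (pd2 f)) (pd2 (pd1 f)) s := by
  intro x hx
  have hca : ContDiffAt ℝ (⊤ : ℕ∞) f x := hf.contDiffAt (hs.mem_nhds hx)
  have hsym : IsSymmSndFDerivAt ℝ f x := hca.isSymmSndFDerivAt (by simp [minSmoothness_of_isRCLikeNormedField]; rw [show ((2:WithTop ℕ∞)) = ((2:ℕ∞) : WithTop ℕ∞) from rfl]; exact WithTop.coe_le_coe.2 le_top)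
  have hdf : DifferentiableAt ℝ (fderiv ℝ f) x := by
    have h : ContDiffOn ℝ (⊤ : ℕ∞) (fderiv ℝ f) s := hf.fderiv_of_isOpen hs (by norm_num)
    exact (h.contDiffAt (hs.mem_nhds hx)).differentiableAt (by simp)
  have key : ∀ v w : ℝ × ℝ, fderiv ℝ (fun y => fderiv ℝ f y v) x w
      = fderiv ℝ (fderiv ℝ f) x w v := by
    intro v w
    rw [fderiv_clm_apply hdf (differentiableAt_const v)]
    simp
  have e1 : pd1 (pd2 f) x = fderiv ℝ (fun y => fderiv ℝ f y (0,1)) x (1,0) := rfl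
  have e2 : pd2 (pd1 f) x = fderiv ℝ (fun y => fderiv ℝ f y (1,0)) x (0,1) := rfl
  rw [e1, e2, key, key]
  exact hsym.eq _ _

lemma Hfun_eq {x : ℝ × ℝ} (h1 : 0 < x.1) (h2 : x.1 < x.2) :
    Hfun x = x.2 * Real.sin (Real.pi * x.1 / x.2) / Real.pi := by
  obtain ⟨p, r⟩ := x
  simp only at h1 h2
  have hr : 0 < r := h1.trans h2
  have hθ0 : 0 < Real.pi * p / r := by positivity
  have hθπ : Real.pi * p / r < Real.pi := by
    rw [div_lt_iff₀ hr]; nlinarith [Real.pi_pos]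
  have hsin : 0 ≤ Real.sin (Real.pi * p / r) :=
    Real.sin_nonneg_of_nonneg_of_le_pi hθ0.le hθπ.le
  have hsq : Real.sqrt (1 - Real.cos (Real.pi * p / r) ^ 2) = Real.sin (Real.pi * p / r) := by
    rw [show 1 - Real.cos (Real.pi * p / r) ^ 2 = Real.sin (Real.pi * p / r) ^ 2 by
      rw [Real.sin_sq]]
    exact Real.sqrt_sq hsin
  have harc : Real.arccos (Real.cos (Real.pi * p / r)) = Real.pi * p / r :=
    Real.arccos_cos hθ0.le hθπ.le
  simp only [Hfun, xpt, tpar, gfun, hsq, harc]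
  field_simp
  ring

lemma gfun_hasDerivAt {t : ℝ} (h1 : -1 < t) (h2 : t < 1) :
    HasDerivAt gfun (-(Real.arccos t)/Real.pi) t := by
  have hpos : 0 < 1 - t^2 := by nlinarith
  have hsne : Real.sqrt (1 - t^2) ≠ 0 := by positivity
  have hsq : HasDerivAt (fun s : ℝ => 1 - s^2) (-(2*t)) t := by
    simpa using ((hasDerivAt_pow 2 t).const_sub 1)
  have hsqrt : HasDerivAt (fun s : ℝ => Real.sqrt (1 - s^2))
      (1 / (2 * Real.sqrt (1 - t^2)) * (-(2*t))) t :=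
    (Real.hasDerivAt_sqrt (ne_of_gt hpos)).comp t hsq
  have harc : HasDerivAt Real.arccos (-(1 / Real.sqrt (1 - t^2))) t :=
    Real.hasDerivAt_arccos (by linarith) (by linarith)
  have hprod : HasDerivAt (fun s : ℝ => s * Real.arccos s)
      (1 * Real.arccos t + t * (-(1 / Real.sqrt (1 - t^2)))) t :=
    (hasDerivAt_id t).mul harc
  have h : HasDerivAt gfun _ t := (hsqrt.sub hprod).div_const Real.pi
  convert h using 1
  field_simp
  ring

lemma Kxi_val {a b : ℝ} (ha : 0 < a) (hab : a < b) (hu : a^2 + b^2 = 1) :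
    Kxi (a, b) = b^3 / (Real.pi * Real.sin (Real.pi * a / b)) := by
  have hb : 0 < b := ha.trans hab
  have hθ0 : 0 < Real.pi * a / b := by positivity
  have hθπ : Real.pi * a / b < Real.pi := by
    rw [div_lt_iff₀ hb]; nlinarith [Real.pi_pos]
  set θ := Real.pi * a / b with hθdef
  have hS : 0 < Real.sin θ := Real.sin_pos_of_pos_of_lt_pi hθ0 hθπ
  set t₀ := Real.cos θ with ht₀
  have ht₁ : -1 < t₀ := by
    have := Real.neg_one_le_cos θ
    rcases eq_or_lt_of_le this with h | h
    · exfalso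
      have : Real.sin θ = 0 := by
        nlinarith [Real.sin_sq_add_cos_sq θ]
      linarith
    · exact h
  have ht₂ : t₀ < 1 := by
    have := Real.cos_le_one θ
    rcases eq_or_lt_of_le this with h | h
    · exfalso
      have : Real.sin θ = 0 := by nlinarith [Real.sin_sq_add_cos_sq θ]
      linarith
    · exact h
  have hsq : Real.sqrt (1 - t₀^2) = Real.sin θ := by
    rw [show 1 - t₀^2 = Real.sin θ ^ 2 by rw [ht₀, Real.sin_sq]]
    exact Real.sqrt_sq hS.le
  have harc : Real.arccos t₀ = θ := Real.arccos_cos hθ0.le hθπ.le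
  -- first derivative
  have hderiv1 : deriv gfun t₀ = -(a/b) := by
    rw [(gfun_hasDerivAt ht₁ ht₂).deriv, harc, hθdef]
    field_simp
  -- second derivative
  have hd2 : deriv (deriv gfun) t₀ = 1 / (Real.pi * Real.sin θ) := by
    have hev : deriv gfun =ᶠ[nhds t₀] (fun s => -(Real.arccos s)/Real.pi) := by
      filter_upwards [(isOpen_Ioo (a := (-1:ℝ)) (b := 1)).mem_nhds ⟨ht₁, ht₂⟩] with s hs
      exact (gfun_hasDerivAt hs.1 hs.2).deriv
    rw [hev.deriv_eq]
    have harc' : HasDerivAt Real.arccos (-(1 / Real.sqrt (1 - t₀^2))) t₀ :=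
      Real.hasDerivAt_arccos (ne_of_gt ht₁) (ne_of_lt ht₂)
    have h := (harc'.neg).div_const Real.pi
    rw [show (fun s => -arccos s / π) = (fun x => (-arccos) x / π) from rfl, h.deriv, hsq]
    field_simp
  have hbase : 1 + (deriv gfun t₀)^2 = 1/b^2 := by
    rw [hderiv1]
    field_simp
    nlinarith
  have hrpow : ((1:ℝ)/b^2) ^ ((3:ℝ)/2) = 1/b^3 := by
    have hbi : (0:ℝ) ≤ b⁻¹ := by positivity
    rw [show (1:ℝ)/b^2 = (b⁻¹)^(2:ℕ) by field_simp]
    rw [← Real.rpow_natCast (b⁻¹) 2, ← Real.rpow_mul hbi]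
    norm_num
  have : tpar (a, b) = t₀ := rfl
  rw [Kxi, Kcurv, this, hd2, hbase, hrpow]
  field_simp



def Aaf (a b : ℝ) (u : ℝ × ℝ) : ℝ := a*(1+u.2) - u.1*b
def Baf (a b : ℝ) (u : ℝ × ℝ) : ℝ := b*(1+u.2) + u.1*a
noncomputable def Sf (a b : ℝ) (u : ℝ × ℝ) : ℝ := Real.sin (Real.pi * Aaf a b u / Baf a b u)
noncomputable def Cf (a b : ℝ) (u : ℝ × ℝ) : ℝ := Real.cos (Real.pi * Aaf a b u / Baf a b u)
noncomputable def Fe (a b : ℝ) (u : ℝ × ℝ) : ℝ := Baf a b u * Sf a b u / Real.pi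
noncomputable def D1f (a b : ℝ) (u : ℝ × ℝ) : ℝ :=
  b * Sf a b u / Real.pi + u.1 * Cf a b u / Baf a b u
noncomputable def Gf (a b : ℝ) (u : ℝ × ℝ) : ℝ := Sf a b u / (Baf a b u)^3
def Vset (a b : ℝ) : Set (ℝ × ℝ) := {u | 0 < Aaf a b u ∧ Aaf a b u < Baf a b u}

lemma contA (a b : ℝ) : ContDiff ℝ (⊤:ℕ∞) (Aaf a b) := by
  unfold Aaf; fun_prop
lemma contB (a b : ℝ) : ContDiff ℝ (⊤:ℕ∞) (Baf a b) := by
  unfold Baf; fun_prop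

lemma Vopen (a b : ℝ) : IsOpen (Vset a b) := by
  have h1 : IsOpen {u : ℝ × ℝ | 0 < Aaf a b u} :=
    isOpen_lt continuous_const (contA a b).continuous
  have h2 : IsOpen {u : ℝ × ℝ | Aaf a b u < Baf a b u} :=
    isOpen_lt (contA a b).continuous (contB a b).continuous
  exact (h1.inter h2)

lemma line_mem {a b : ℝ} (ha : 0 < a) (hab : a < b) {t : ℝ} (ht : -1 < t) :
    ((0:ℝ), t) ∈ Vset a b := by
  constructor
  · show 0 < a*(1+t) - 0*b
    nlinarith
  · show a*(1+t) - 0*b < b*(1+t) + 0*a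
    nlinarith

lemma zero_mem {a b : ℝ} (ha : 0 < a) (hab : a < b) : (((0:ℝ),(0:ℝ))) ∈ Vset a b :=
  line_mem ha hab (by norm_num)

lemma Bpos {a b : ℝ} {u : ℝ × ℝ} (hu : u ∈ Vset a b) : 0 < Baf a b u :=
  lt_trans hu.1 hu.2

lemma smooth_Sf {a b : ℝ} : ContDiffOn ℝ (⊤:ℕ∞) (Sf a b) (Vset a b) := by
  apply (Real.contDiff_sin (n := (⊤:ℕ∞))).comp_contDiffOn
  exact (((contA a b).contDiffOn.const_smul Real.pi).div (contB a b).contDiffOn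
    (fun u hu => ne_of_gt (Bpos hu))).congr (fun u hu => by simp [smul_eq_mul])

lemma smooth_Cf {a b : ℝ} : ContDiffOn ℝ (⊤:ℕ∞) (Cf a b) (Vset a b) := by
  apply (Real.contDiff_cos (n := (⊤:ℕ∞))).comp_contDiffOn
  exact (((contA a b).contDiffOn.const_smul Real.pi).div (contB a b).contDiffOn
    (fun u hu => ne_of_gt (Bpos hu))).congr (fun u hu => by simp [smul_eq_mul])

lemma smooth_Fe {a b : ℝ} : ContDiffOn ℝ (⊤:ℕ∞) (Fe a b) (Vset a b) :=
  ((contB a b).contDiffOn.mul smooth_Sf).div_const Real.pi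

lemma smooth_D1f {a b : ℝ} : ContDiffOn ℝ (⊤:ℕ∞) (D1f a b) (Vset a b) := by
  apply ContDiffOn.add
  · exact (smooth_Sf.const_smul b).congr (fun u hu => by simp [smul_eq_mul]) |>.div_const Real.pi
  · exact (contDiff_fst.contDiffOn.mul smooth_Cf).div (contB a b).contDiffOn
      (fun u hu => ne_of_gt (Bpos hu))

lemma smooth_Gf {a b : ℝ} : ContDiffOn ℝ (⊤:ℕ∞) (Gf a b) (Vset a b) :=
  smooth_Sf.div ((contB a b).contDiffOn.pow 3)
    (fun u hu => pow_ne_zero 3 (ne_of_gt (Bpos hu)))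

-- derivative of θ = π A / B along the second coordinate
lemma theta_hasDerivAt_2 {a b p t : ℝ} (hu : a^2 + b^2 = 1)
    (hB : Baf a b (p,t) ≠ 0) :
    HasDerivAt (fun s => Real.pi * Aaf a b (p,s) / Baf a b (p,s))
      (Real.pi * p / (Baf a b (p,t))^2) t := by
  have hA : HasDerivAt (fun s => Real.pi * Aaf a b (p,s)) (Real.pi * a) t := by
    have : HasDerivAt (fun s : ℝ => Real.pi * (a*(1+s) - p*b)) (Real.pi * a) t := by
      have h1 : HasDerivAt (fun s : ℝ => a*(1+s) - p*b) a t := by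
        simpa using (((hasDerivAt_id t).const_add 1).const_mul a).sub_const (p*b)
      simpa using h1.const_mul Real.pi
    simpa [Aaf] using this
  have hBd : HasDerivAt (fun s => Baf a b (p,s)) b t := by
    have : HasDerivAt (fun s : ℝ => b*(1+s) + p*a) b t := by
      simpa using (((hasDerivAt_id t).const_add 1).const_mul b).add_const (p*a)
    simpa [Baf] using this
  have h : HasDerivAt (fun s => Real.pi * Aaf a b (p,s) / Baf a b (p,s)) _ t := hA.div hBd hB
  convert h using 1
  have hkey : a * Baf a b (p,t) - Aaf a b (p,t) * b = p * (a^2+b^2) := by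
    simp only [Aaf, Baf]; ring
  rw [hu, mul_one] at hkey
  field_simp
  linear_combination (-1) * hkey

-- derivative of θ along the first coordinate
lemma theta_hasDerivAt_1 {a b p t : ℝ} (hu : a^2 + b^2 = 1)
    (hB : Baf a b (p,t) ≠ 0) :
    HasDerivAt (fun s => Real.pi * Aaf a b (s,t) / Baf a b (s,t))
      (-(Real.pi * (1+t)) / (Baf a b (p,t))^2) p := by
  have hA : HasDerivAt (fun s => Real.pi * Aaf a b (s,t)) (Real.pi * (-b)) p := by
    have h1 : HasDerivAt (fun s : ℝ => a*(1+t) - s*b) (-b) p := by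
      simpa [Pi.sub_def] using (hasDerivAt_const p (a*(1+t))).sub ((hasDerivAt_id p).mul_const b)
    simpa [Aaf] using h1.const_mul Real.pi
  have hBd : HasDerivAt (fun s => Baf a b (s,t)) a p := by
    have h1 : HasDerivAt (fun s : ℝ => b*(1+t) + s*a) a p := by
      simpa [Pi.add_def] using (hasDerivAt_const p (b*(1+t))).add ((hasDerivAt_id p).mul_const a)
    simpa [Baf] using h1
  have h : HasDerivAt (fun s => Real.pi * Aaf a b (s,t) / Baf a b (s,t)) _ p := hA.div hBd hB
  convert h using 1
  have hkey : b * Baf a b (p,t) + Aaf a b (p,t) * a = (1+t) * (a^2+b^2) := by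
    simp only [Aaf, Baf]; ring
  rw [hu, mul_one] at hkey
  field_simp
  linear_combination hkey

lemma C1 {a b : ℝ} (ha : 0 < a) (hab : a < b) (hu : a^2 + b^2 = 1) :
    EqOn (pd2 (Fe a b)) (D1f a b) (Vset a b) := by
  intro x hx
  obtain ⟨p, t⟩ := x
  have hBne : Baf a b (p,t) ≠ 0 := ne_of_gt (Bpos hx)
  rw [pd2_eq_deriv (diffAt_of_smoothOn (Vopen a b) smooth_Fe hx)]
  have hθ := theta_hasDerivAt_2 (p := p) (t := t) hu hBne
  have hBd : HasDerivAt (fun s => Baf a b (p,s)) b t := by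
    have : HasDerivAt (fun s : ℝ => b*(1+s) + p*a) b t := by
      simpa using (((hasDerivAt_id t).const_add 1).const_mul b).add_const (p*a)
    simpa [Baf] using this
  have hS : HasDerivAt (fun s => Sf a b (p,s))
      (Cf a b (p,t) * (Real.pi * p / (Baf a b (p,t))^2)) t := by
    simpa [Sf, Cf] using hθ.sin
  have hFe : HasDerivAt (fun s => Fe a b (p,s))
      ((b * Sf a b (p,t) + Baf a b (p,t) * (Cf a b (p,t) * (Real.pi * p / (Baf a b (p,t))^2)))
        / Real.pi) t := by
    simpa [Fe] using (hBd.mul hS).div_const Real.pi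
  rw [hFe.deriv]
  show _ = b * Sf a b (p,t) / Real.pi + p * Cf a b (p,t) / Baf a b (p,t)
  field_simp

lemma C2 {a b : ℝ} (ha : 0 < a) (hab : a < b) (hu : a^2 + b^2 = 1) :
    EqOn (pd2 (D1f a b)) (fun u => -Real.pi * u.1^2 * Gf a b u) (Vset a b) := by
  intro x hx
  obtain ⟨p, t⟩ := x
  have hBne : Baf a b (p,t) ≠ 0 := ne_of_gt (Bpos hx)
  rw [pd2_eq_deriv (diffAt_of_smoothOn (Vopen a b) smooth_D1f hx)]
  have hθ := theta_hasDerivAt_2 (p := p) (t := t) hu hBne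
  have hBd : HasDerivAt (fun s => Baf a b (p,s)) b t := by
    have : HasDerivAt (fun s : ℝ => b*(1+s) + p*a) b t := by
      simpa using (((hasDerivAt_id t).const_add 1).const_mul b).add_const (p*a)
    simpa [Baf] using this
  have hS : HasDerivAt (fun s => Sf a b (p,s))
      (Cf a b (p,t) * (Real.pi * p / (Baf a b (p,t))^2)) t := by
    simpa [Sf, Cf] using hθ.sin
  have hC : HasDerivAt (fun s => Cf a b (p,s))
      (-Sf a b (p,t) * (Real.pi * p / (Baf a b (p,t))^2)) t := by
    simpa [Sf, Cf] using hθ.cos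
  have hD1 : HasDerivAt (fun s => D1f a b (p,s))
      (b * (Cf a b (p,t) * (Real.pi * p / (Baf a b (p,t))^2)) / Real.pi
        + ((p * (-Sf a b (p,t) * (Real.pi * p / (Baf a b (p,t))^2))) * Baf a b (p,t)
            - p * Cf a b (p,t) * b) / (Baf a b (p,t))^2) t := by
    have h1 := (hS.const_mul b).div_const Real.pi
    have h2 := (hC.const_mul p).div hBd hBne
    simpa [D1f, Pi.add_def, Pi.div_def] using h1.add h2
  rw [hD1.deriv]
  show _ = -Real.pi * p^2 * (Sf a b (p,t) / (Baf a b (p,t))^3)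
  field_simp
  ring

lemma hasDerivAt_line1 {h : ℝ × ℝ → ℝ} {x : ℝ × ℝ} (hd : DifferentiableAt ℝ h x) :
    HasDerivAt (fun s => h (s, x.2)) (pd1 h x) x.1 := by
  have hc : HasDerivAt (fun s : ℝ => ((s, x.2) : ℝ × ℝ)) ((1 : ℝ), (0 : ℝ)) x.1 :=
    (hasDerivAt_id x.1).prodMk (hasDerivAt_const x.1 x.2)
  have h2 : HasFDerivAt h (fderiv ℝ h x) ((x.1, x.2) : ℝ × ℝ) := by
    rw [Prod.mk.eta]; exact hd.hasFDerivAt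
  exact h2.comp_hasDerivAt x.1 hc

lemma hasDerivAt_line2 {h : ℝ × ℝ → ℝ} {x : ℝ × ℝ} (hd : DifferentiableAt ℝ h x) :
    HasDerivAt (fun s => h (x.1, s)) (pd2 h x) x.2 := by
  have hc : HasDerivAt (fun s : ℝ => ((x.1, s) : ℝ × ℝ)) ((0 : ℝ), (1 : ℝ)) x.2 :=
    (hasDerivAt_const x.2 x.1).prodMk (hasDerivAt_id x.2)
  have h2 : HasFDerivAt h (fderiv ℝ h x) ((x.1, x.2) : ℝ × ℝ) := by
    rw [Prod.mk.eta]; exact hd.hasFDerivAt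
  exact h2.comp_hasDerivAt x.2 hc

lemma pd2_sq_mul {h : ℝ × ℝ → ℝ} {s : Set (ℝ × ℝ)} (hs : IsOpen s)
    (hh : ContDiffOn ℝ (⊤:ℕ∞) h s) :
    EqOn (pd2 (fun u => -Real.pi * u.1^2 * h u)) (fun u => -Real.pi * u.1^2 * pd2 h u) s := by
  intro x hx
  have hd : DifferentiableAt ℝ h x := diffAt_of_smoothOn hs hh hx
  have hdp : DifferentiableAt ℝ (fun u : ℝ × ℝ => -Real.pi * u.1^2 * h u) x :=
    ((differentiableAt_fst.pow 2).const_mul (-Real.pi)).mul hd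
  rw [pd2_eq_deriv hdp]
  have hline := hasDerivAt_line2 hd
  have : HasDerivAt (fun t => -Real.pi * x.1^2 * h (x.1, t))
      (-Real.pi * x.1^2 * pd2 h x) x.2 := hline.const_mul _
  exact this.deriv

lemma pd1_sq_mul {h : ℝ × ℝ → ℝ} {s : Set (ℝ × ℝ)} (hs : IsOpen s)
    (hh : ContDiffOn ℝ (⊤:ℕ∞) h s) :
    EqOn (pd1 (fun u => -Real.pi * u.1^2 * h u))
      (fun u => -Real.pi * (2*u.1*h u + u.1^2 * pd1 h u)) s := by
  intro x hx
  have hd : DifferentiableAt ℝ h x := diffAt_of_smoothOn hs hh hx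
  have hdp : DifferentiableAt ℝ (fun u : ℝ × ℝ => -Real.pi * u.1^2 * h u) x :=
    ((differentiableAt_fst.pow 2).const_mul (-Real.pi)).mul hd
  rw [pd1_eq_deriv hdp]
  have hline := hasDerivAt_line1 hd
  have hsq : HasDerivAt (fun t : ℝ => t^2) (2*x.1) x.1 := by
    simpa using hasDerivAt_pow 2 x.1
  have h1 : HasDerivAt (fun t => t^2 * h (t, x.2))
      (2*x.1 * h x + x.1^2 * pd1 h x) x.1 := by
    have := hsq.mul hline
    simpa [Prod.mk.eta, Pi.mul_def] using this
  have h2 : HasDerivAt (fun t => -Real.pi * (t^2 * h (t, x.2)))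
      (-Real.pi * (2*x.1 * h x + x.1^2 * pd1 h x)) x.1 := h1.const_mul _
  have e : (fun t : ℝ => -Real.pi * ((t, x.2) : ℝ × ℝ).1 ^ 2 * h (t, x.2))
      = (fun t => -Real.pi * (t^2 * h (t, x.2))) := by
    funext t; ring
  show deriv (fun t : ℝ => -Real.pi * ((t, x.2) : ℝ × ℝ).1 ^ 2 * h (t, x.2)) x.1 = _
  rw [e, h2.deriv]

lemma ev_lin {h k : ℝ × ℝ → ℝ} {s : Set (ℝ × ℝ)} (hs : IsOpen s)
    (hh : ContDiffOn ℝ (⊤:ℕ∞) h s) (hk : ContDiffOn ℝ (⊤:ℕ∞) k s)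
    (h0 : ((0:ℝ),(0:ℝ)) ∈ s) :
    pd1 (fun u => -Real.pi * (2*u.1*h u + u.1^2 * k u)) ((0:ℝ),(0:ℝ))
      = -2*Real.pi*h ((0:ℝ),(0:ℝ)) := by
  have hd : DifferentiableAt ℝ h ((0:ℝ),(0:ℝ)) := diffAt_of_smoothOn hs hh h0
  have hdk : DifferentiableAt ℝ k ((0:ℝ),(0:ℝ)) := diffAt_of_smoothOn hs hk h0
  have hdp : DifferentiableAt ℝ (fun u : ℝ × ℝ => -Real.pi * (2*u.1*h u + u.1^2 * k u))
      ((0:ℝ),(0:ℝ)) := by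
    apply DifferentiableAt.const_mul
    exact ((differentiableAt_fst.const_mul 2).mul hd).add
      ((differentiableAt_fst.pow 2).mul hdk)
  have hlh : HasDerivAt (fun t : ℝ => h (t, (0:ℝ))) (pd1 h ((0:ℝ),(0:ℝ))) 0 :=
    hasDerivAt_line1 hd
  have hlk : HasDerivAt (fun t : ℝ => k (t, (0:ℝ))) (pd1 k ((0:ℝ),(0:ℝ))) 0 :=
    hasDerivAt_line1 hdk
  have h1 : HasDerivAt (fun t : ℝ => 2*t*h (t,(0:ℝ))) (2*h ((0:ℝ),(0:ℝ))) 0 := by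
    have := ((hasDerivAt_id (0:ℝ)).mul hlh).const_mul (2:ℝ)
    simpa [mul_assoc] using this
  have h2 : HasDerivAt (fun t : ℝ => t^2 * k (t,(0:ℝ))) (0:ℝ) 0 := by
    have h2' : HasDerivAt (fun t : ℝ => t^2) ((0:ℝ)) 0 := by
      simpa using hasDerivAt_pow 2 (0:ℝ)
    simpa [Pi.mul_def] using h2'.mul hlk
  have hsum : HasDerivAt (fun t : ℝ => -Real.pi * (2*t*h (t,(0:ℝ)) + t^2 * k (t,(0:ℝ))))
      (-2*Real.pi*h ((0:ℝ),(0:ℝ))) 0 := by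
    have : HasDerivAt (fun t : ℝ => -Real.pi * (2*t*h (t,(0:ℝ)) + t^2 * k (t,(0:ℝ)))) _ 0 :=
      (h1.add h2).const_mul (-Real.pi)
    convert this using 1
    ring
  rw [pd1_eq_deriv hdp]
  exact hsum.deriv

lemma ev_sq {h : ℝ × ℝ → ℝ} {s : Set (ℝ × ℝ)} (hs : IsOpen s)
    (hh : ContDiffOn ℝ (⊤:ℕ∞) h s) (h0 : ((0:ℝ),(0:ℝ)) ∈ s) :
    pd1 (fun u => -Real.pi * u.1^2 * h u) ((0:ℝ),(0:ℝ)) = 0 := by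
  rw [pd1_sq_mul hs hh h0]
  norm_num

lemma pd2_smoothOn {f : ℝ × ℝ → ℝ} {s : Set (ℝ × ℝ)} (hs : IsOpen s)
    (hf : ContDiffOn ℝ (⊤:ℕ∞) f s) : ContDiffOn ℝ (⊤:ℕ∞) (pd2 f) s :=
  pd_smooth hs hf (0,1)

lemma pd1_smoothOn {f : ℝ × ℝ → ℝ} {s : Set (ℝ × ℝ)} (hs : IsOpen s)
    (hf : ContDiffOn ℝ (⊤:ℕ∞) f s) : ContDiffOn ℝ (⊤:ℕ∞) (pd1 f) s :=
  pd_smooth hs hf (1,0)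

lemma smooth_Gk {a b : ℝ} (k : ℕ) :
    ContDiffOn ℝ (⊤:ℕ∞) (pd2^[k] (Gf a b)) (Vset a b) := by
  induction k with
  | zero => simpa using smooth_Gf
  | succ n ih =>
    rw [Function.iterate_succ_apply']
    exact pd2_smoothOn (Vopen a b) ih

lemma smooth_Fek {a b : ℝ} (k : ℕ) :
    ContDiffOn ℝ (⊤:ℕ∞) (pd2^[k] (Fe a b)) (Vset a b) := by
  induction k with
  | zero => simpa using smooth_Fe
  | succ n ih =>
    rw [Function.iterate_succ_apply']
    exact pd2_smoothOn (Vopen a b) ih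

lemma Citer {a b : ℝ} (ha : 0 < a) (hab : a < b) (hu : a^2 + b^2 = 1) (k : ℕ) :
    EqOn (pd2^[k+2] (Fe a b)) (fun u => -Real.pi * u.1^2 * pd2^[k] (Gf a b) u)
      (Vset a b) := by
  induction k with
  | zero =>
    have e : pd2^[2] (Fe a b) = pd2 (pd2 (Fe a b)) := by
      rw [show (2:ℕ) = 1+1 from rfl, Function.iterate_succ_apply', Function.iterate_one]
    rw [e]
    have h1 : EqOn (pd2 (pd2 (Fe a b))) (pd2 (D1f a b)) (Vset a b) :=
      pd2_congr (Vopen a b) (C1 ha hab hu)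
    have h2 := C2 ha hab hu
    intro x hx
    simpa using (h1 hx).trans (h2 hx)
  | succ n ih =>
    have e : pd2^[n+3] (Fe a b) = pd2 (pd2^[n+2] (Fe a b)) := Function.iterate_succ_apply' _ _ _
    rw [e]
    intro x hx
    have h1 : pd2 (pd2^[n+2] (Fe a b)) x
        = pd2 (fun u => -Real.pi * u.1^2 * pd2^[n] (Gf a b) u) x :=
      pd2_congr (Vopen a b) ih hx
    have h2 := pd2_sq_mul (Vopen a b) (smooth_Gk (a := a) (b := b) n) hx
    rw [h1, h2]
    simp only [← Function.iterate_succ_apply' pd2 n (Gf a b)]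

lemma line_val {a b : ℝ} (ha : 0 < a) (hab : a < b) (hu : a^2 + b^2 = 1) (k : ℕ) :
    ∀ t : ℝ, -1 < t → pd2^[k] (Gf a b) ((0:ℝ), t)
      = (-1)^k * ((k+2).factorial : ℝ) / 2 * Real.sin (Real.pi*a/b)
          / (b^3 * (1+t)^(k+3)) := by
  have hb : 0 < b := ha.trans hab
  induction k with
  | zero =>
    intro t ht
    have h1t : (0:ℝ) < 1 + t := by linarith
    have hθeq : Real.pi * Aaf a b ((0:ℝ),t) / Baf a b ((0:ℝ),t) = Real.pi * a / b := by
      simp only [Aaf, Baf]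
      field_simp
      ring
    simp only [Function.iterate_zero, id_eq, Gf, Sf, hθeq]
    simp only [Baf]
    rw [show b*(1+t) + 0*a = b*(1+t) by ring]
    rw [mul_pow]
    norm_num [Nat.factorial]
  | succ n ih =>
    intro t ht
    have h1t : (0:ℝ) < 1 + t := by linarith
    have hmem : ((0:ℝ), t) ∈ Vset a b := line_mem ha hab ht
    rw [Function.iterate_succ_apply']
    rw [pd2_eq_deriv (diffAt_of_smoothOn (Vopen a b) (smooth_Gk n) hmem)]
    have hev : (fun s => pd2^[n] (Gf a b) ((0:ℝ), s))
        =ᶠ[nhds t] (fun s => (-1)^n * ((n+2).factorial : ℝ) / 2 * Real.sin (Real.pi*a/b)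
          / (b^3 * (1+s)^(n+3))) := by
      filter_upwards [(isOpen_Ioi (a := (-1:ℝ))).mem_nhds ht] with s hs
      exact ih s hs
    rw [hev.deriv_eq]
    set C := (-1)^n * ((n+2).factorial : ℝ) / 2 * Real.sin (Real.pi*a/b) with hC
    have hpow : HasDerivAt (fun s : ℝ => (1+s)^(n+3))
        (((n:ℝ)+3)*(1+t)^(n+2)) t := by
      have h1 : HasDerivAt (fun s : ℝ => 1+s) 1 t := by
        simpa using (hasDerivAt_id t).const_add 1
      have := h1.pow (n+3)
      simpa [Nat.add_sub_cancel, Pi.pow_def] using this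
    have hdenom : HasDerivAt (fun s : ℝ => b^3*(1+s)^(n+3))
        (b^3*(((n:ℝ)+3)*(1+t)^(n+2))) t := hpow.const_mul _
    have hdne : b^3*(1+t)^(n+3) ≠ 0 := by positivity
    have hdiv := (hasDerivAt_const t C).div hdenom hdne
    erw [hdiv.deriv]
    have hfact : (((n+1)+2).factorial : ℝ) = ((n:ℝ)+3) * ((n+2).factorial : ℝ) := by
      rw [show (n+1)+2 = (n+2)+1 from rfl, Nat.factorial_succ]
      push_cast
      ring
    rw [hC, hfact]
    have hne1t : (1+t) ≠ 0 := ne_of_gt h1t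
    field_simp
    ring

noncomputable def D1pf (a b : ℝ) (u : ℝ × ℝ) : ℝ :=
  -b*(1+u.2)*Cf a b u/(Baf a b u)^2 + Cf a b u/Baf a b u
    + u.1*(Real.pi*(1+u.2)*Sf a b u/(Baf a b u)^3 - a*Cf a b u/(Baf a b u)^2)

lemma C1' {a b : ℝ} (ha : 0 < a) (hab : a < b) (hu : a^2 + b^2 = 1) :
    EqOn (pd1 (D1f a b)) (D1pf a b) (Vset a b) := by
  intro x hx
  obtain ⟨p, t⟩ := x
  have hBne : Baf a b (p,t) ≠ 0 := ne_of_gt (Bpos hx)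
  rw [pd1_eq_deriv (diffAt_of_smoothOn (Vopen a b) smooth_D1f hx)]
  have hθ := theta_hasDerivAt_1 (p := p) (t := t) hu hBne
  have hBd : HasDerivAt (fun s => Baf a b (s,t)) a p := by
    have h1 : HasDerivAt (fun s : ℝ => b*(1+t) + s*a) a p := by
      simpa [Pi.add_def] using (hasDerivAt_const p (b*(1+t))).add ((hasDerivAt_id p).mul_const a)
    simpa [Baf] using h1
  have hS : HasDerivAt (fun s => Sf a b (s,t))
      (Cf a b (p,t) * (-(Real.pi * (1+t)) / (Baf a b (p,t))^2)) p := by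
    simpa [Sf, Cf] using hθ.sin
  have hC : HasDerivAt (fun s => Cf a b (s,t))
      (-Sf a b (p,t) * (-(Real.pi * (1+t)) / (Baf a b (p,t))^2)) p := by
    simpa [Sf, Cf] using hθ.cos
  have hD : HasDerivAt (fun s => D1f a b (s,t))
      ((b * (Cf a b (p,t) * (-(Real.pi * (1+t)) / (Baf a b (p,t))^2))) / Real.pi
        + ((Cf a b (p,t) + p * (-Sf a b (p,t) * (-(Real.pi * (1+t)) / (Baf a b (p,t))^2)))
            * Baf a b (p,t) - p * Cf a b (p,t) * a) / (Baf a b (p,t))^2) p := by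
    have h1 := (hS.const_mul b).div_const Real.pi
    have h2 := (((hasDerivAt_id p).mul hC).div hBd hBne)
    have h3 : HasDerivAt (fun s => D1f a b (s,t)) _ p := h1.add h2
    convert h3 using 1
    simp
  rw [hD.deriv]
  show _ = D1pf a b (p,t)
  simp only [D1pf]
  field_simp
  ring

lemma smooth_D1pf {a b : ℝ} : ContDiffOn ℝ (⊤:ℕ∞) (D1pf a b) (Vset a b) := by
  have hB2 : ∀ u ∈ Vset a b, (Baf a b u)^2 ≠ 0 := fun u hu => pow_ne_zero _ (ne_of_gt (Bpos hu))
  have hB3 : ∀ u ∈ Vset a b, (Baf a b u)^3 ≠ 0 := fun u hu => pow_ne_zero _ (ne_of_gt (Bpos hu))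
  have hp1 : ContDiff ℝ (⊤:ℕ∞) (fun u : ℝ×ℝ => -b*(1+u.2)) := by fun_prop
  have hp2 : ContDiff ℝ (⊤:ℕ∞) (fun u : ℝ×ℝ => Real.pi*(1+u.2)) := by fun_prop
  apply ContDiffOn.add
  apply ContDiffOn.add
  · exact (hp1.contDiffOn.mul smooth_Cf).div ((contB a b).contDiffOn.pow 2) hB2
  · exact smooth_Cf.div (contB a b).contDiffOn (fun u hu => ne_of_gt (Bpos hu))
  · exact contDiff_fst.contDiffOn.mul
      (((hp2.contDiffOn.mul smooth_Sf).div ((contB a b).contDiffOn.pow 3) hB3).sub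
        ((smooth_Cf.const_smul a).congr (fun u _ => by simp [smul_eq_mul]) |>.div
          ((contB a b).contDiffOn.pow 2) hB2))

lemma evD1p {a b : ℝ} (ha : 0 < a) (hab : a < b) (hu : a^2 + b^2 = 1) :
    pd1 (D1pf a b) ((0:ℝ),(0:ℝ)) = Real.pi * Real.sin (Real.pi*a/b) / b^3 := by
  have hb : 0 < b := ha.trans hab
  have h0 : ((0:ℝ),(0:ℝ)) ∈ Vset a b := zero_mem ha hab
  have hBne : Baf a b ((0:ℝ),(0:ℝ)) ≠ 0 := ne_of_gt (Bpos h0)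
  have hB2ne : (Baf a b ((0:ℝ),(0:ℝ)))^2 ≠ 0 := pow_ne_zero _ hBne
  have hB3ne : (Baf a b ((0:ℝ),(0:ℝ)))^3 ≠ 0 := pow_ne_zero _ hBne
  rw [pd1_eq_deriv (diffAt_of_smoothOn (Vopen a b) smooth_D1pf h0)]
  have hθ := theta_hasDerivAt_1 (p := (0:ℝ)) (t := (0:ℝ)) hu hBne
  have hBd : HasDerivAt (fun s => Baf a b (s,(0:ℝ))) a 0 := by
    have h1 : HasDerivAt (fun s : ℝ => b*(1+(0:ℝ)) + s*a) a 0 := by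
      simpa [Pi.add_def] using (hasDerivAt_const (0:ℝ) (b*(1+(0:ℝ)))).add ((hasDerivAt_id (0:ℝ)).mul_const a)
    simpa [Baf] using h1
  have hS : HasDerivAt (fun s => Sf a b (s,(0:ℝ)))
      (Cf a b ((0:ℝ),(0:ℝ)) * (-(Real.pi * (1+(0:ℝ))) / (Baf a b ((0:ℝ),(0:ℝ)))^2)) 0 := by
    simpa [Sf, Cf] using hθ.sin
  have hC : HasDerivAt (fun s => Cf a b (s,(0:ℝ)))
      (-Sf a b ((0:ℝ),(0:ℝ)) * (-(Real.pi * (1+(0:ℝ))) / (Baf a b ((0:ℝ),(0:ℝ)))^2)) 0 := by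
    simpa [Sf, Cf] using hθ.cos
  have hB2 := hBd.pow 2
  have hB3 := hBd.pow 3
  have hT1 := (hC.const_mul (-b*(1+(0:ℝ)))).div hB2 hB2ne
  have hT2 := hC.div hBd hBne
  have hX := ((hS.const_mul (Real.pi*(1+(0:ℝ)))).div hB3 hB3ne).sub
    ((hC.const_mul a).div hB2 hB2ne)
  have hT3 := (hasDerivAt_id (0:ℝ)).mul hX
  have htot := (hT1.add hT2).add hT3
  have hfn : (fun s : ℝ => D1pf a b (s,(0:ℝ)))
      = (fun s : ℝ => -b*(1+(0:ℝ))*Cf a b (s,(0:ℝ))/(Baf a b (s,(0:ℝ)))^2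
          + Cf a b (s,(0:ℝ))/Baf a b (s,(0:ℝ))
          + id s*(Real.pi*(1+(0:ℝ))*Sf a b (s,(0:ℝ))/(Baf a b (s,(0:ℝ)))^3
              - a*Cf a b (s,(0:ℝ))/(Baf a b (s,(0:ℝ)))^2)) := by
    funext s; simp [D1pf]
  rw [hfn]
  erw [htot.deriv]
  have hBv : Baf a b ((0:ℝ),(0:ℝ)) = b := by simp [Baf]
  have hAv : Aaf a b ((0:ℝ),(0:ℝ)) = a := by simp [Aaf]
  simp only [Sf, Cf, hBv, hAv, id_eq, Pi.pow_apply, Pi.sub_apply, Pi.div_apply]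
  field_simp
  ring

lemma Nval {a b : ℝ} (ha : 0 < a) (hab : a < b) (hu : a^2 + b^2 = 1) (q : ℕ) (hq1 : 1 ≤ q) :
    pd1 (pd1 (pd2^[q] (Fe a b))) ((0:ℝ),(0:ℝ))
      = -Real.pi * (-1)^q * (q.factorial : ℝ) * Real.sin (Real.pi*a/b) / b^3 := by
  have hb : 0 < b := ha.trans hab
  have h0 : ((0:ℝ),(0:ℝ)) ∈ Vset a b := zero_mem ha hab
  rcases Nat.lt_or_ge q 2 with hq2 | hq2
  · -- q = 1
    have hq : q = 1 := by omega
    subst hq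
    have e1 : EqOn (pd1 (pd2^[1] (Fe a b))) (pd1 (D1f a b)) (Vset a b) := by
      apply pd1_congr (Vopen a b)
      simpa using C1 ha hab hu
    have e2 : EqOn (pd1 (pd1 (pd2^[1] (Fe a b)))) (pd1 (pd1 (D1f a b))) (Vset a b) :=
      pd1_congr (Vopen a b) e1
    have e3 : EqOn (pd1 (pd1 (D1f a b))) (pd1 (D1pf a b)) (Vset a b) :=
      pd1_congr (Vopen a b) (C1' ha hab hu)
    rw [e2 h0, e3 h0, evD1p ha hab hu]
    norm_num [Nat.factorial]
  · -- q ≥ 2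
    set g := pd2^[q-2] (Gf a b) with hg
    have hiter : EqOn (pd2^[q] (Fe a b)) (fun u => -Real.pi * u.1^2 * g u) (Vset a b) := by
      have := Citer ha hab hu (q-2)
      rwa [show q - 2 + 2 = q by omega] at this
    have e1 : EqOn (pd1 (pd2^[q] (Fe a b)))
        (pd1 (fun u => -Real.pi * u.1^2 * g u)) (Vset a b) := pd1_congr (Vopen a b) hiter
    have e2 : EqOn (pd1 (fun u => -Real.pi * u.1^2 * g u))
        (fun u => -Real.pi * (2*u.1*g u + u.1^2 * pd1 g u)) (Vset a b) :=
      pd1_sq_mul (Vopen a b) (smooth_Gk (q-2))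
    have e3 : EqOn (pd1 (pd1 (pd2^[q] (Fe a b))))
        (pd1 (fun u => -Real.pi * (2*u.1*g u + u.1^2 * pd1 g u))) (Vset a b) :=
      pd1_congr (Vopen a b) (e1.trans e2)
    rw [e3 h0]
    rw [ev_lin (Vopen a b) (smooth_Gk (q-2)) (pd1_smoothOn (Vopen a b) (smooth_Gk (q-2))) h0]
    have hval := line_val ha hab hu (q-2) 0 (by norm_num)
    rw [show q - 2 + 2 = q by omega] at hval
    rw [hval]
    have hsign : ((-1:ℝ))^(q-2) = (-1)^q := by
      have h' : ((-1:ℝ))^(q-2) * (-1)^2 = (-1)^q := by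
        rw [← pow_add, show q-2+2 = q by omega]
      simpa using h'
    rw [hsign]
    norm_num
    field_simp

lemma Phi_eq {a b : ℝ} (ha : 0 < a) (hab : a < b) :
    EqOn (fun u : ℝ × ℝ => Hfun (((a,b) : ℝ×ℝ) + u.1 • ((-b,a) : ℝ×ℝ) + u.2 • ((a,b):ℝ×ℝ)))
      (Fe a b) (Vset a b) := by
  intro u hu
  have hpt : ((a,b) : ℝ×ℝ) + u.1 • ((-b,a):ℝ×ℝ) + u.2 • ((a,b):ℝ×ℝ)
      = (Aaf a b u, Baf a b u) := by
    simp only [Prod.ext_iff, Prod.fst_add, Prod.snd_add, Prod.smul_fst, Prod.smul_snd,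
      smul_eq_mul, Aaf, Baf]
    constructor <;> ring
  show Hfun _ = _
  rw [hpt, Hfun_eq (x := (Aaf a b u, Baf a b u)) hu.1 hu.2]
  rfl

theorem hq_value_at_orthonormal_frame (q : ℕ) (hq1 : 1 ≤ q) (ξ : ℝ × ℝ)
    (hξc : ξ ∈ cone0) (hξu : enorm2 ξ = 1) :
    hq q ξ (-ξ.2, ξ.1) (ξ.1, ξ.2) = -((q.factorial : ℝ))^2 * (Kxi ξ ^ 2)⁻¹ := by
  obtain ⟨a, b⟩ := ξ
  obtain ⟨ha, hb, hba⟩ := hξc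
  simp only at ha hb hba ⊢
  have hab : a < b := by
    have := (one_lt_div ha).mp hba
    linarith
  have hu : a^2 + b^2 = 1 := by
    have h := hξu
    simp only [enorm2] at h
    have := Real.sqrt_eq_one.mp h
    linarith [this]
  have hbpos : 0 < b := ha.trans hab
  have hS : 0 < Real.sin (Real.pi*a/b) := by
    apply Real.sin_pos_of_pos_of_lt_pi
    · positivity
    · rw [div_lt_iff₀ hbpos]; nlinarith [Real.pi_pos]
  set S₀ := Real.sin (Real.pi*a/b) with hS₀
  have hV := Vopen a b
  have h0 : ((0:ℝ),(0:ℝ)) ∈ Vset a b := zero_mem ha hab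
  have hq' : q - 1 + 1 = q := Nat.sub_add_cancel hq1
  -- the function in gij
  set Φ : ℝ × ℝ → ℝ :=
    fun u : ℝ × ℝ => Hfun (((a,b) : ℝ×ℝ) + u.1 • ((-b,a) : ℝ×ℝ) + u.2 • ((a,b):ℝ×ℝ)) with hΦ
  have hPhiFe : EqOn Φ (Fe a b) (Vset a b) := Phi_eq ha hab
  have hPk : ∀ k : ℕ, EqOn (pd2^[k] Φ) (pd2^[k] (Fe a b)) (Vset a b) :=
    fun k => pd2_iter_congr hV hPhiFe k
  -- g22 = 0
  have hg22 : gij q (a,b) (-b,a) (a,b) 1 1 = 0 := by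
    have e0 : gij q (a,b) (-b,a) (a,b) 1 1 = pd1 (pd2 (pd2 (pd2^[q-1] Φ))) ((0:ℝ),(0:ℝ)) := by
      simp [gij, hΦ]
    rw [e0]
    have eiter : pd2 (pd2 (pd2^[q-1] Φ)) = pd2^[q+1] Φ := by
      rw [← Function.iterate_succ_apply' pd2 (q-1) Φ, Nat.succ_eq_add_one, hq',
        ← Function.iterate_succ_apply' pd2 q Φ, Nat.succ_eq_add_one]
    rw [eiter]
    have hiter2 : EqOn (pd2^[q+1] (Fe a b))
        (fun u => -Real.pi * u.1^2 * pd2^[q-1] (Gf a b) u) (Vset a b) := by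
      have := Citer ha hab hu (q-1)
      rwa [show q - 1 + 2 = q + 1 by omega] at this
    have e1 : EqOn (pd2^[q+1] Φ) (fun u => -Real.pi * u.1^2 * pd2^[q-1] (Gf a b) u)
        (Vset a b) := (hPk (q+1)).trans hiter2
    rw [pd1_congr hV e1 h0]
    exact ev_sq hV (smooth_Gk (q-1)) h0
  -- g12
  have hg12 : gij q (a,b) (-b,a) (a,b) 0 1
      = -Real.pi * (-1)^q * (q.factorial : ℝ) * S₀ / b^3 := by
    have e0 : gij q (a,b) (-b,a) (a,b) 0 1 = pd1 (pd1 (pd2 (pd2^[q-1] Φ))) ((0:ℝ),(0:ℝ)) := by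
      simp [gij, hΦ]
    rw [e0]
    have eiter : pd2 (pd2^[q-1] Φ) = pd2^[q] Φ := by
      rw [← Function.iterate_succ_apply' pd2 (q-1) Φ, Nat.succ_eq_add_one, hq']
    rw [eiter]
    have e1 : EqOn (pd1 (pd2^[q] Φ)) (pd1 (pd2^[q] (Fe a b))) (Vset a b) :=
      pd1_congr hV (hPk q)
    rw [pd1_congr hV e1 h0]
    exact Nval ha hab hu q hq1
  -- g21
  have hg21 : gij q (a,b) (-b,a) (a,b) 1 0
      = -Real.pi * (-1)^q * (q.factorial : ℝ) * S₀ / b^3 := by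
    have e0 : gij q (a,b) (-b,a) (a,b) 1 0 = pd1 (pd2 (pd1 (pd2^[q-1] Φ))) ((0:ℝ),(0:ℝ)) := by
      simp [gij, hΦ]
    rw [e0]
    have e1 : EqOn (pd1 (pd2^[q-1] Φ)) (pd1 (pd2^[q-1] (Fe a b))) (Vset a b) :=
      pd1_congr hV (hPk (q-1))
    have e2 : EqOn (pd2 (pd1 (pd2^[q-1] Φ))) (pd2 (pd1 (pd2^[q-1] (Fe a b)))) (Vset a b) :=
      pd2_congr hV e1
    have e3 : EqOn (pd2 (pd1 (pd2^[q-1] (Fe a b)))) (pd1 (pd2 (pd2^[q-1] (Fe a b))))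
        (Vset a b) := (pd_swap hV (smooth_Fek (q-1))).symm
    have e4 : EqOn (pd2 (pd1 (pd2^[q-1] Φ))) (pd1 (pd2^[q] (Fe a b))) (Vset a b) := by
      have : pd2 (pd2^[q-1] (Fe a b)) = pd2^[q] (Fe a b) := by
        rw [← Function.iterate_succ_apply' pd2 (q-1) (Fe a b), Nat.succ_eq_add_one, hq']
      rw [← this]
      exact e2.trans e3
    rw [pd1_congr hV e4 h0]
    exact Nval ha hab hu q hq1
  -- assemble
  have hKxi : Kxi (a,b) = b^3/(Real.pi * S₀) := Kxi_val ha hab hu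
  rw [hq, hg22, hg12, hg21, hKxi]
  have hsq : ((-1:ℝ)^q)^2 = 1 := by
    rw [← pow_mul, mul_comm, pow_mul]
    norm_num
  have hπ := Real.pi_pos
  field_simp
  linear_combination (-1 * Real.pi^2 * ((q.factorial : ℝ))^2 * S₀^2) * hsq
end

section
/- Let k ≥ 2, let Ω ⊂ ℝ^d be open, let f : Ω → ℝ^d be a C^k mapping, let a ∈ Ω and b = f(a). Assume |det(∇f(a))| ≥ c and that |D^ν f_i(x)| ≤ C for all x ∈ Ω, all multi-indices ν with |ν| ≤ 2, and all 1 ≤ i ≤ d. Let r₀ ≤ sup{r > 0 : B(a,r) ⊂ Ω}, and set r₁ = min( c/(2 d² d! C^d), r₀ ) and r₂ = (c/(4 d! C^{d−1})) r₁. Then f is injective on B(a, r₁), the image f(B(a, r₁)) is an open set containing B(b, r₂), and the inverse mapping f^{−1} : f(B(a,r₁)) → B(a,r₁) is C^k. -/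
open Real Set Metric

namespace QIFTaux

variable {d : ℕ}

lemma euclid_decomp (u : EuclideanSpace ℝ (Fin d)) :
    u = ∑ j, u j • EuclideanSpace.single j (1:ℝ) := by
  classical
  ext i
  have := map_sum (PiLp.proj (𝕜 := ℝ) 2 (fun _ : Fin d => ℝ) i)
    (fun x : Fin d => u x • EuclideanSpace.single x (1:ℝ)) Finset.univ
  simp only [PiLp.proj_apply] at this
  rw [this]
  simp [EuclideanSpace.single_apply, mul_comm]

lemma sum_abs_le (u : EuclideanSpace ℝ (Fin d)) :
    ∑ j, |u j| ≤ Real.sqrt d * ‖u‖ := by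
  have h1 : (∑ j, |u j|) ^ 2 ≤ (d : ℝ) * ∑ j, |u j| ^ 2 := by
    simpa using sq_sum_le_card_mul_sum_sq (s := (Finset.univ : Finset (Fin d)))
      (f := fun j => |u j|)
  have h2 : (∑ j, |u j| ^ 2) = ‖u‖ ^ 2 := by
    rw [EuclideanSpace.norm_eq, Real.sq_sqrt (by positivity)]
    simp [sq_abs]
  calc (∑ j, |u j|) = Real.sqrt ((∑ j, |u j|) ^ 2) := by
        rw [Real.sqrt_sq (by positivity)]
    _ ≤ Real.sqrt ((d : ℝ) * ‖u‖ ^ 2) := Real.sqrt_le_sqrt (by rw [← h2]; exact h1)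
    _ = Real.sqrt d * ‖u‖ := by
        rw [Real.sqrt_mul (by positivity), Real.sqrt_sq (norm_nonneg _)]

lemma opNorm_le_scalar (T : EuclideanSpace ℝ (Fin d) →L[ℝ] ℝ) {m : ℝ} (hm : 0 ≤ m)
    (h : ∀ j, |T (EuclideanSpace.single j 1)| ≤ m) : ‖T‖ ≤ Real.sqrt d * m := by
  refine T.opNorm_le_bound (by positivity) fun u => ?_
  have : T u = ∑ j, u j * T (EuclideanSpace.single j 1) := by
    conv_lhs => rw [euclid_decomp u]
    rw [map_sum]
    simp [smul_eq_mul]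
  rw [this]
  calc ‖∑ j, u j * T (EuclideanSpace.single j 1)‖
      ≤ ∑ j, ‖u j * T (EuclideanSpace.single j 1)‖ := norm_sum_le _ _
    _ ≤ ∑ j, |u j| * m := by
        refine Finset.sum_le_sum fun j _ => ?_
        rw [norm_mul]
        exact mul_le_mul_of_nonneg_left (h j) (abs_nonneg _)
    _ = (∑ j, |u j|) * m := by rw [← Finset.sum_mul]
    _ ≤ (Real.sqrt d * ‖u‖) * m := mul_le_mul_of_nonneg_right (sum_abs_le u) hm
    _ = Real.sqrt d * m * ‖u‖ := by ring

lemma opNorm_le_matrix (T : EuclideanSpace ℝ (Fin d) →L[ℝ] EuclideanSpace ℝ (Fin d)) {m : ℝ}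
    (hm : 0 ≤ m) (h : ∀ i j, |T (EuclideanSpace.single j 1) i| ≤ m) : ‖T‖ ≤ d * m := by
  refine T.opNorm_le_bound (by positivity) fun u => ?_
  have hTe : ∀ j, ‖T (EuclideanSpace.single j 1)‖ ≤ Real.sqrt d * m := by
    intro j
    rw [EuclideanSpace.norm_eq]
    calc Real.sqrt (∑ i, ‖T (EuclideanSpace.single j 1) i‖ ^ 2)
        ≤ Real.sqrt (∑ _i : Fin d, m ^ 2) := by
          refine Real.sqrt_le_sqrt (Finset.sum_le_sum fun i _ => ?_)
          rw [Real.norm_eq_abs]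
          exact pow_le_pow_left₀ (abs_nonneg _) (h i j) 2
      _ = Real.sqrt d * m := by
          rw [Finset.sum_const, Finset.card_univ, Fintype.card_fin, nsmul_eq_mul,
            Real.sqrt_mul (by positivity), Real.sqrt_sq hm]
  have : T u = ∑ j, u j • T (EuclideanSpace.single j 1) := by
    conv_lhs => rw [euclid_decomp u]
    rw [map_sum]
    simp
  rw [this]
  calc ‖∑ j, u j • T (EuclideanSpace.single j 1)‖
      ≤ ∑ j, ‖u j • T (EuclideanSpace.single j 1)‖ := norm_sum_le _ _
    _ ≤ ∑ j, |u j| * (Real.sqrt d * m) := by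
        refine Finset.sum_le_sum fun j _ => ?_
        rw [norm_smul, Real.norm_eq_abs]
        exact mul_le_mul_of_nonneg_left (hTe j) (abs_nonneg _)
    _ = (∑ j, |u j|) * (Real.sqrt d * m) := by rw [← Finset.sum_mul]
    _ ≤ (Real.sqrt d * ‖u‖) * (Real.sqrt d * m) :=
        mul_le_mul_of_nonneg_right (sum_abs_le u) (by positivity)
    _ = (Real.sqrt d * Real.sqrt d) * m * ‖u‖ := by ring
    _ = d * m * ‖u‖ := by
        rw [Real.mul_self_sqrt (Nat.cast_nonneg d)]

lemma adjugate_bound {M : Matrix (Fin d) (Fin d) ℝ} {C : ℝ}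
    (hM : ∀ i j, |M i j| ≤ C) (i j : Fin d) :
    |M.adjugate i j| ≤ ((d - 1).factorial : ℝ) * C ^ (d - 1) := by
  classical
  cases d with
  | zero => exact absurd i.2 (by simp)
  | succ n =>
    rw [Matrix.adjugate_fin_succ_eq_det_submatrix]
    rw [abs_mul, abs_pow, abs_neg, abs_one, one_pow, one_mul]
    have := Matrix.det_le (A := M.submatrix j.succAbove i.succAbove)
      (abv := AbsoluteValue.abs) (x := C)
      (fun a b => hM _ _)
    simpa [Nat.succ_sub_one, nsmul_eq_mul] using this

noncomputable def bas (d : ℕ) : Module.Basis (Fin d) ℝ (EuclideanSpace ℝ (Fin d)) :=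
  (EuclideanSpace.basisFun (Fin d) ℝ).toBasis

lemma toMatrix_entry (A : EuclideanSpace ℝ (Fin d) →L[ℝ] EuclideanSpace ℝ (Fin d)) (i j : Fin d) :
    LinearMap.toMatrix (bas d) (bas d) (A : EuclideanSpace ℝ (Fin d) →ₗ[ℝ] _) i j
      = A (EuclideanSpace.single j 1) i := by
  rw [LinearMap.toMatrix_apply]
  simp [bas, EuclideanSpace.basisFun_apply, EuclideanSpace.basisFun_repr]

lemma toLin_entry (P : Matrix (Fin d) (Fin d) ℝ) (i j : Fin d) :
    (Matrix.toLin (bas d) (bas d) P (EuclideanSpace.single j 1)) i = P i j := by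
  classical
  have hbj : (bas d) j = EuclideanSpace.single j 1 := by
    simp [bas, EuclideanSpace.basisFun_apply]
  rw [← hbj, Matrix.toLin_self]
  have := map_sum (PiLp.proj (𝕜 := ℝ) 2 (fun _ : Fin d => ℝ) i)
    (fun i' : Fin d => P i' j • (bas d) i') Finset.univ
  simp only [PiLp.proj_apply] at this
  rw [this]
  simp [bas, EuclideanSpace.basisFun_apply, EuclideanSpace.single_apply, mul_comm]

end QIFTaux

open QIFTaux

set_option maxHeartbeats 1000000

/-- A quantitative version of the inverse function theorem. -/
theorem quantitative_inverse_function_theorem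
    (d k : ℕ) (hk : 2 ≤ k)
    (Ω : Set (EuclideanSpace ℝ (Fin d))) (hΩ : IsOpen Ω)
    (f : EuclideanSpace ℝ (Fin d) → EuclideanSpace ℝ (Fin d))
    (hf : ContDiffOn ℝ k f Ω)
    (a b : EuclideanSpace ℝ (Fin d)) (ha : a ∈ Ω) (hb : b = f a)
    (c C : ℝ) (hc : 0 < c) (hC : 0 < C)
    (hdet : c ≤ |(Matrix.of fun i j : Fin d =>
        fderiv ℝ (fun x => f x i) a (EuclideanSpace.single j 1)).det|)
    (hD0 : ∀ x ∈ Ω, ∀ i : Fin d, |f x i| ≤ C)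
    (hD1 : ∀ x ∈ Ω, ∀ i j : Fin d,
      |fderiv ℝ (fun y => f y i) x (EuclideanSpace.single j 1)| ≤ C)
    (hD2 : ∀ x ∈ Ω, ∀ i j l : Fin d,
      |fderiv ℝ (fun y => fderiv ℝ (fun z => f z i) y (EuclideanSpace.single j 1)) x
        (EuclideanSpace.single l 1)| ≤ C)
    (r₀ : ℝ) (hr₀ : r₀ ≤ sSup {r : ℝ | 0 < r ∧ Metric.ball a r ⊆ Ω})
    (r₁ r₂ : ℝ)
    (hr₁ : r₁ = min (c / (2 * (d:ℝ)^2 * (d.factorial : ℝ) * C^d)) r₀)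
    (hr₂ : r₂ = c / (4 * (d.factorial : ℝ) * C^(d-1)) * r₁) :
    Set.InjOn f (Metric.ball a r₁) ∧
    IsOpen (f '' Metric.ball a r₁) ∧
    Metric.ball b r₂ ⊆ f '' Metric.ball a r₁ ∧
    ∃ finv : EuclideanSpace ℝ (Fin d) → EuclideanSpace ℝ (Fin d),
      (∀ x ∈ Metric.ball a r₁, finv (f x) = x) ∧
      (∀ y ∈ f '' Metric.ball a r₁, f (finv y) = y) ∧
      ContDiffOn ℝ k finv (f '' Metric.ball a r₁) := by
  classical
  by_cases hr₁pos : r₁ ≤ 0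
  · -- degenerate case: the ball is empty
    have hball1 : Metric.ball a r₁ = ∅ := Metric.ball_eq_empty.2 hr₁pos
    have hcoef : 0 ≤ c / (4 * (d.factorial : ℝ) * C^(d-1)) := by positivity
    have hr₂0 : r₂ ≤ 0 := by
      rw [hr₂]
      exact mul_nonpos_of_nonneg_of_nonpos hcoef hr₁pos
    have hball2 : Metric.ball b r₂ = ∅ := Metric.ball_eq_empty.2 hr₂0
    refine ⟨by simp [hball1], by simp [hball1], by simp [hball1, hball2], fun _ => a,
      by simp [hball1], by simp [hball1],
      by rw [hball1, Set.image_empty]; exact fun x hx => absurd hx (Set.notMem_empty x)⟩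
  push_neg at hr₁pos
  -- basic positivity and inclusion facts
  have hd : 0 < d := by
    rcases Nat.eq_zero_or_pos d with h0 | h
    · exfalso
      subst h0
      have : r₁ ≤ 0 := by
        rw [hr₁]
        refine (min_le_left _ _).trans ?_
        norm_num
      linarith
    · exact h
  have hd1 : (1:ℝ) ≤ (d:ℝ) := by exact_mod_cast hd
  have hdfac : (0:ℝ) < (d.factorial : ℝ) := by positivity
  have hΩball : Metric.ball a r₁ ⊆ Ω := by
    set S : Set ℝ := {r : ℝ | 0 < r ∧ Metric.ball a r ⊆ Ω} with hS
    have hSne : S.Nonempty := by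
      by_contra h
      rw [Set.not_nonempty_iff_eq_empty] at h
      rw [h, Real.sSup_empty] at hr₀
      have : r₁ ≤ 0 := hr₁ ▸ (min_le_right _ _).trans hr₀
      linarith
    have hSbdd : BddAbove S := by
      by_contra h
      rw [Real.sSup_of_not_bddAbove h] at hr₀
      have : r₁ ≤ 0 := hr₁ ▸ (min_le_right _ _).trans hr₀
      linarith
    intro x hx
    have hxr : dist x a < sSup S :=
      lt_of_lt_of_le (mem_ball.1 hx) (le_trans (hr₁ ▸ min_le_right _ _) hr₀)
    obtain ⟨r, hrS, hr⟩ := exists_lt_of_lt_csSup hSne hxr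
    exact hrS.2 (mem_ball.2 hr)
  have hk1 : (k : WithTop ℕ∞) ≠ 0 := by exact_mod_cast (by omega : k ≠ 0)
  have hk2 : ((1 : WithTop ℕ∞) + 1 : WithTop ℕ∞) ≤ (k : WithTop ℕ∞) := by exact_mod_cast hk
  have hdiff : ∀ x ∈ Ω, DifferentiableAt ℝ f x := fun x hx =>
    (hf.differentiableOn hk1).differentiableAt (hΩ.mem_nhds hx)
  have hcoord : ∀ x ∈ Ω, ∀ (i : Fin d) (v : EuclideanSpace ℝ (Fin d)),
      fderiv ℝ (fun y => f y i) x v = fderiv ℝ f x v i := by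
    intro x hx i v
    have h1 : HasFDerivAt (fun y => f y i)
        ((PiLp.proj 2 (fun _ : Fin d => ℝ) i).comp (fderiv ℝ f x)) x :=
      (PiLp.hasFDerivAt_apply (𝕜 := ℝ) 2 (f x) i).comp x (hdiff x hx).hasFDerivAt
    rw [h1.fderiv]
    rfl
  -- the derivative at `a` and its matrix
  set M : Matrix (Fin d) (Fin d) ℝ := Matrix.of fun i j : Fin d =>
    fderiv ℝ (fun x => f x i) a (EuclideanSpace.single j 1) with hMdef
  set A : EuclideanSpace ℝ (Fin d) →L[ℝ] EuclideanSpace ℝ (Fin d) := fderiv ℝ f a with hA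
  have hMA : LinearMap.toMatrix (bas d) (bas d)
      (A : EuclideanSpace ℝ (Fin d) →ₗ[ℝ] EuclideanSpace ℝ (Fin d)) = M := by
    ext i j
    rw [toMatrix_entry]
    show A (EuclideanSpace.single j 1) i = fderiv ℝ (fun x => f x i) a (EuclideanSpace.single j 1)
    rw [hcoord a ha i (EuclideanSpace.single j 1)]
  have hdetM : M.det ≠ 0 := by
    intro h
    rw [h] at hdet
    simp at hdet
    linarith
  have hdet0 : IsUnit (LinearMap.toMatrix (bas d) (bas d)
      (A : EuclideanSpace ℝ (Fin d) →ₗ[ℝ] EuclideanSpace ℝ (Fin d))).det := by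
    rw [hMA]
    exact isUnit_iff_ne_zero.2 hdetM
  set Aeq : EuclideanSpace ℝ (Fin d) ≃L[ℝ] EuclideanSpace ℝ (Fin d) :=
    (LinearEquiv.ofIsUnitDet hdet0).toContinuousLinearEquiv with hAeqdef
  have hAeqA : (Aeq : EuclideanSpace ℝ (Fin d) →L[ℝ] EuclideanSpace ℝ (Fin d)) = A := by
    refine ContinuousLinearMap.ext fun z => ?_
    show (LinearEquiv.ofIsUnitDet hdet0).toContinuousLinearEquiv z = A z
    rw [LinearEquiv.coe_toContinuousLinearEquiv']
    simp [LinearEquiv.ofIsUnitDet_apply]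
  -- bound on the inverse
  have hMent : ∀ i j, |M i j| ≤ C := fun i j => hD1 a ha i j
  have hMinv_ent : ∀ i j, |(M⁻¹) i j| ≤ ((d-1).factorial : ℝ) * C^(d-1) / c := by
    intro i j
    rw [Matrix.inv_def, Ring.inverse_eq_inv]
    rw [Matrix.smul_apply, smul_eq_mul, abs_mul, abs_inv]
    have h1 : |M.adjugate i j| ≤ ((d-1).factorial : ℝ) * C^(d-1) := adjugate_bound hMent i j
    have h2 : |M.det|⁻¹ ≤ c⁻¹ := by
      apply inv_anti₀ hc hdet
    calc |M.det|⁻¹ * |M.adjugate i j| ≤ c⁻¹ * (((d-1).factorial : ℝ) * C^(d-1)) := by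
          apply mul_le_mul h2 h1 (abs_nonneg _) (by positivity)
      _ = ((d-1).factorial : ℝ) * C^(d-1) / c := by ring
  have hsymm_ent : ∀ i j, |((Aeq.symm : EuclideanSpace ℝ (Fin d) →L[ℝ] EuclideanSpace ℝ (Fin d))
      (EuclideanSpace.single j 1)) i| ≤ ((d-1).factorial : ℝ) * C^(d-1) / c := by
    intro i j
    have h0 : (Aeq.symm : EuclideanSpace ℝ (Fin d) →L[ℝ] EuclideanSpace ℝ (Fin d))
        (EuclideanSpace.single j 1)
        = Matrix.toLin (bas d) (bas d) M⁻¹ (EuclideanSpace.single j 1) := by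
      show (LinearEquiv.ofIsUnitDet hdet0).toContinuousLinearEquiv.symm (EuclideanSpace.single j 1)
        = _
      rw [LinearEquiv.coe_toContinuousLinearEquiv_symm']
      show Matrix.toLin (bas d) (bas d) (LinearMap.toMatrix (bas d) (bas d) _)⁻¹ _ = _
      rw [hMA]
    rw [h0, toLin_entry]
    exact hMinv_ent i j
  have hsymm_norm : ‖(Aeq.symm : EuclideanSpace ℝ (Fin d) →L[ℝ] EuclideanSpace ℝ (Fin d))‖
      ≤ (d.factorial : ℝ) * C^(d-1) / c := by
    have := opNorm_le_matrix
      (Aeq.symm : EuclideanSpace ℝ (Fin d) →L[ℝ] EuclideanSpace ℝ (Fin d))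
      (by positivity) hsymm_ent
    refine this.trans (le_of_eq ?_)
    have hfac : (d.factorial : ℝ) = d * ((d-1).factorial : ℝ) := by
      cases d with
      | zero => simp at hd
      | succ n => simp [Nat.factorial_succ]
    rw [hfac]
    ring
  -- the derivative is Lipschitz on the ball, via second derivative bounds
  have hfd1 : ContDiffOn ℝ 1 (fderiv ℝ f) Ω := hf.fderiv_of_isOpen hΩ hk2
  have hfd1' : ∀ y ∈ Ω, DifferentiableAt ℝ (fderiv ℝ f) y := fun y hy =>
    ((hfd1.differentiableOn one_ne_zero).differentiableAt (hΩ.mem_nhds hy))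
  have hgdiff : ∀ (i j : Fin d), ∀ y ∈ Ω, DifferentiableAt ℝ
      (fun y => fderiv ℝ (fun z => f z i) y (EuclideanSpace.single j 1)) y := by
    intro i j y hy
    have h1 : DifferentiableAt ℝ
        (fun y => (fderiv ℝ f y (EuclideanSpace.single j 1)) i) y := by
      have h2 : DifferentiableAt ℝ (fun y => fderiv ℝ f y (EuclideanSpace.single j 1)) y :=
        (hfd1' y hy).clm_apply (differentiableAt_const _)
      exact (differentiableAt_piLp 2).1 h2 i
    refine h1.congr_of_eventuallyEq ?_
    filter_upwards [hΩ.mem_nhds hy] with z hz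
    exact hcoord z hz i (EuclideanSpace.single j 1)
  have hgbound : ∀ (i j : Fin d), ∀ y ∈ Metric.ball a r₁,
      ‖fderiv ℝ (fun y => fderiv ℝ (fun z => f z i) y (EuclideanSpace.single j 1)) y‖
        ≤ Real.sqrt d * C := by
    intro i j y hy
    exact opNorm_le_scalar _ hC.le (fun l => hD2 y (hΩball hy) i j l)
  have hamem : a ∈ Metric.ball a r₁ := mem_ball_self hr₁pos
  have hent_lip : ∀ x ∈ Metric.ball a r₁, ∀ (i j : Fin d),
      |((fderiv ℝ f x - A) (EuclideanSpace.single j 1)) i| ≤ Real.sqrt d * C * r₁ := by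
    intro x hx i j
    have key := Convex.norm_image_sub_le_of_norm_fderiv_le
      (f := fun y => fderiv ℝ (fun z => f z i) y (EuclideanSpace.single j 1))
      (s := Metric.ball a r₁) (C := Real.sqrt d * C)
      (fun y hy => hgdiff i j y (hΩball hy)) (fun y hy => hgbound i j y hy)
      (convex_ball a r₁) hamem hx
    have hxa : ‖x - a‖ ≤ r₁ := by
      rw [← dist_eq_norm]
      exact (mem_ball.1 hx).le
    have h1 : ((fderiv ℝ f x - A) (EuclideanSpace.single j 1)) i
        = fderiv ℝ (fun z => f z i) x (EuclideanSpace.single j 1)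
          - fderiv ℝ (fun z => f z i) a (EuclideanSpace.single j 1) := by
      rw [hcoord x (hΩball hx) i, hcoord a ha i]
      simp [hA]
    rw [h1]
    calc |fderiv ℝ (fun z => f z i) x (EuclideanSpace.single j 1)
          - fderiv ℝ (fun z => f z i) a (EuclideanSpace.single j 1)|
        ≤ Real.sqrt d * C * ‖x - a‖ := key
      _ ≤ Real.sqrt d * C * r₁ := by
          apply mul_le_mul_of_nonneg_left hxa (by positivity)
  set ε : ℝ := d * (Real.sqrt d * C * r₁) with hεdef
  have hε0 : 0 ≤ ε := by positivity
  have hlip : ∀ x ∈ Metric.ball a r₁, ‖fderiv ℝ f x - A‖ ≤ ε := by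
    intro x hx
    exact opNorm_le_matrix _ (by positivity) (hent_lip x hx)
  -- the approximation property
  have approx : ApproximatesLinearOn f
      (Aeq : EuclideanSpace ℝ (Fin d) →L[ℝ] EuclideanSpace ℝ (Fin d))
      (Metric.ball a r₁) ε.toNNReal := by
    intro x hx y hy
    have := Convex.norm_image_sub_le_of_norm_fderiv_le' (f := f) (s := Metric.ball a r₁)
      (φ := A) (C := ε) (fun z hz => hdiff z (hΩball hz))
      (fun z hz => hlip z hz) (convex_ball a r₁) hy hx
    rw [hAeqA]
    rw [Real.coe_toNNReal _ hε0]
    simpa [dist_eq_norm] using this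
  -- numerical bounds
  set N₀ : ℝ := (d.factorial : ℝ) * C^(d-1) / c with hN₀def
  have hN₀pos : 0 < N₀ := by positivity
  have hsqd : Real.sqrt d ≤ d := by
    nlinarith [Real.sq_sqrt (Nat.cast_nonneg d : (0:ℝ) ≤ (d:ℝ)), Real.sqrt_nonneg (d:ℝ),
      sq_nonneg (Real.sqrt (d:ℝ) - 1), hd1]
  have hr₁le : r₁ ≤ c / (2 * (d:ℝ)^2 * (d.factorial : ℝ) * C^d) := hr₁ ▸ min_le_left _ _
  have hCd : C^(d-1) * C = C^d := by
    rw [← pow_succ]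
    congr 1
    omega
  have hN₀ε : N₀ * ε ≤ 1/2 := by
    have h1 : ε ≤ (d:ℝ) * ((d:ℝ) * C * r₁) := by
      rw [hεdef]
      apply mul_le_mul_of_nonneg_left _ (Nat.cast_nonneg d)
      apply mul_le_mul_of_nonneg_right _ hr₁pos.le
      exact mul_le_mul_of_nonneg_right hsqd hC.le
    have h2 : N₀ * ((d:ℝ) * ((d:ℝ) * C * r₁)) ≤ 1/2 := by
      rw [hN₀def]
      rw [div_mul_eq_mul_div, div_le_iff₀ hc]
      have h3 : (d.factorial : ℝ) * C^(d-1) * ((d:ℝ) * ((d:ℝ) * C * r₁))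
          = (2 * (d:ℝ)^2 * (d.factorial : ℝ) * C^d) * r₁ / 2 := by
        rw [← hCd]; ring
      rw [h3]
      have h4 : (2 * (d:ℝ)^2 * (d.factorial : ℝ) * C^d) * r₁ ≤ c := by
        have hpos : (0:ℝ) < 2 * (d:ℝ)^2 * (d.factorial : ℝ) * C^d := by positivity
        rw [← le_div_iff₀' hpos]
        exact hr₁le
      linarith
    calc N₀ * ε ≤ N₀ * ((d:ℝ) * ((d:ℝ) * C * r₁)) :=
          mul_le_mul_of_nonneg_left h1 hN₀pos.le
      _ ≤ 1/2 := h2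
  set Ns : ℝ := ‖(Aeq.symm : EuclideanSpace ℝ (Fin d) →L[ℝ] EuclideanSpace ℝ (Fin d))‖ with hNs
  have hNspos : 0 < Ns := by
    rw [hNs]
    have h1 : Aeq.symm (EuclideanSpace.single (⟨0, hd⟩ : Fin d) 1) ≠ 0 := by
      intro h
      have := congrArg Aeq h
      rw [Aeq.apply_symm_apply] at this
      simp at this
    have h2 : (0:ℝ) < ‖Aeq.symm (EuclideanSpace.single (⟨0, hd⟩ : Fin d) 1)‖ :=
      norm_pos_iff.2 h1
    by_contra h
    push_neg at h
    have : (Aeq.symm : EuclideanSpace ℝ (Fin d) →L[ℝ] EuclideanSpace ℝ (Fin d)) = 0 :=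
      norm_le_zero_iff.1 h
    rw [show Aeq.symm (EuclideanSpace.single (⟨0, hd⟩ : Fin d) 1)
      = (Aeq.symm : EuclideanSpace ℝ (Fin d) →L[ℝ] EuclideanSpace ℝ (Fin d))
        (EuclideanSpace.single (⟨0, hd⟩ : Fin d) 1) from rfl, this] at h2
    simp at h2
  have hNsε : Ns * ε ≤ 1/2 := by
    calc Ns * ε ≤ N₀ * ε := mul_le_mul_of_nonneg_right hsymm_norm hε0
      _ ≤ 1/2 := hN₀ε
  have hεNs : ε < Ns⁻¹ := by
    have h1 : Ns * ε < Ns * Ns⁻¹ := by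
      rw [mul_inv_cancel₀ hNspos.ne']
      linarith
    exact (mul_lt_mul_iff_right₀ hNspos).1 h1
  have hεnn : ε.toNNReal <
      (‖(Aeq.symm : EuclideanSpace ℝ (Fin d) →L[ℝ] EuclideanSpace ℝ (Fin d))‖₊)⁻¹ := by
    rw [← NNReal.coe_lt_coe, NNReal.coe_inv, coe_nnnorm, Real.coe_toNNReal _ hε0]
    exact hεNs
  have goal1 : Set.InjOn f (Metric.ball a r₁) := approx.injOn (Or.inr hεnn)
  have goal2 : IsOpen (f '' Metric.ball a r₁) :=
    approx.open_image Aeq.toNonlinearRightInverse isOpen_ball (Or.inr hεnn)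
  have hNs_inv_ge : N₀⁻¹ ≤ Ns⁻¹ := inv_anti₀ hNspos hsymm_norm
  have hεhalf : ε ≤ Ns⁻¹ / 2 := by
    rw [le_div_iff₀ (by norm_num : (0:ℝ) < 2)]
    calc ε * 2 = 2 * ε := by ring
      _ ≤ Ns⁻¹ := by
        rw [← mul_le_mul_iff_right₀ hNspos, ← mul_assoc, mul_inv_cancel₀ hNspos.ne']
        linarith
  have goal3 : Metric.ball b r₂ ⊆ f '' Metric.ball a r₁ := by
    intro y hy
    have hsub : Metric.closedBall a (r₁/2) ⊆ Metric.ball a r₁ :=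
      closedBall_subset_ball (by linarith)
    have hsurj := approx.surjOn_closedBall_of_nonlinearRightInverse
      Aeq.toNonlinearRightInverse (b := a) (ε := r₁/2) (by positivity) hsub
    have hnncoe : (Aeq.toNonlinearRightInverse.nnnorm : ℝ) = Ns := rfl
    have hdist : dist y (f a)
        ≤ ((Aeq.toNonlinearRightInverse.nnnorm : ℝ)⁻¹ - (ε.toNNReal : ℝ)) * (r₁ / 2) := by
      rw [hnncoe, Real.coe_toNNReal _ hε0]
      have hN₀inv : N₀⁻¹ = c / ((d.factorial : ℝ) * C^(d-1)) := by
        rw [hN₀def, inv_div]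
      have hr₂' : r₂ = N₀⁻¹ * r₁ / 4 := by
        rw [hr₂, hN₀inv]
        rw [show (4 : ℝ) * (d.factorial : ℝ) * C^(d-1)
          = ((d.factorial : ℝ) * C^(d-1)) * 4 by ring, ← div_div]
        ring
      have h5 : N₀⁻¹ * r₁ / 4 ≤ Ns⁻¹ * r₁ / 4 := by
        have := mul_le_mul_of_nonneg_right hNs_inv_ge hr₁pos.le
        linarith
      have h7 : (Ns⁻¹/2) * (r₁/2) ≤ (Ns⁻¹ - ε) * (r₁/2) := by
        apply mul_le_mul_of_nonneg_right _ (by positivity)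
        linarith
      calc dist y (f a) = dist y b := by rw [hb]
        _ ≤ r₂ := (mem_ball.1 hy).le
        _ ≤ (Ns⁻¹ - ε) * (r₁/2) := by rw [hr₂']; linarith
    exact Set.image_mono (f := f) hsub (hsurj (mem_closedBall.2 hdist))
  refine ⟨goal1, goal2, goal3, Function.invFunOn f (Metric.ball a r₁), ?_, ?_, ?_⟩
  · exact fun x hx => goal1.leftInvOn_invFunOn hx
  · rintro y ⟨x, hx, rfl⟩
    exact Function.invFunOn_eq ⟨x, hx, rfl⟩
  · rintro y₀ ⟨x₀, hx₀, rfl⟩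
    have hx₀Ω : x₀ ∈ Ω := hΩball hx₀
    have cdf : ContDiffAt ℝ k f x₀ := hf.contDiffAt (hΩ.mem_nhds hx₀Ω)
    set B : EuclideanSpace ℝ (Fin d) →L[ℝ] EuclideanSpace ℝ (Fin d) := fderiv ℝ f x₀ with hBdef
    have hBA : ‖B - A‖ ≤ ε := hlip x₀ hx₀
    have hsc : ∀ z, Aeq.symm (A z) = z := by
      intro z
      conv_lhs => rw [← hAeqA]
      exact Aeq.symm_apply_apply z
    have hcs : ∀ z, A (Aeq.symm z) = z := by
      intro z
      conv_lhs => rw [← hAeqA]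
      exact Aeq.apply_symm_apply z
    have ht : ‖(1 : EuclideanSpace ℝ (Fin d) →L[ℝ] EuclideanSpace ℝ (Fin d))
        - (Aeq.symm : EuclideanSpace ℝ (Fin d) →L[ℝ] EuclideanSpace ℝ (Fin d)) * B‖ < 1 := by
      have h1 : (1 : EuclideanSpace ℝ (Fin d) →L[ℝ] EuclideanSpace ℝ (Fin d))
          - (Aeq.symm : EuclideanSpace ℝ (Fin d) →L[ℝ] EuclideanSpace ℝ (Fin d)) * B
          = (Aeq.symm : EuclideanSpace ℝ (Fin d) →L[ℝ] EuclideanSpace ℝ (Fin d)).comp (A - B) := by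
        refine ContinuousLinearMap.ext fun z => ?_
        simp only [ContinuousLinearMap.sub_apply, ContinuousLinearMap.one_apply,
          ContinuousLinearMap.mul_apply, ContinuousLinearMap.coe_comp', Function.comp_apply,
          map_sub, ContinuousLinearEquiv.coe_coe]
        rw [hsc z]
      rw [h1]
      calc ‖(Aeq.symm : EuclideanSpace ℝ (Fin d) →L[ℝ] EuclideanSpace ℝ (Fin d)).comp (A - B)‖
          ≤ Ns * ‖A - B‖ := ContinuousLinearMap.opNorm_comp_le _ _
        _ = Ns * ‖B - A‖ := by rw [norm_sub_rev]
        _ ≤ Ns * ε := mul_le_mul_of_nonneg_left hBA hNspos.le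
        _ ≤ 1/2 := hNsε
        _ < 1 := by norm_num
    set u : (EuclideanSpace ℝ (Fin d) →L[ℝ] EuclideanSpace ℝ (Fin d))ˣ :=
      Units.oneSub _ ht with hudef
    have huval : (u : EuclideanSpace ℝ (Fin d) →L[ℝ] EuclideanSpace ℝ (Fin d))
        = (Aeq.symm : EuclideanSpace ℝ (Fin d) →L[ℝ] EuclideanSpace ℝ (Fin d)) * B :=
      sub_sub_cancel _ _
    set Binv : EuclideanSpace ℝ (Fin d) →L[ℝ] EuclideanSpace ℝ (Fin d) :=
      (↑u⁻¹ : EuclideanSpace ℝ (Fin d) →L[ℝ] EuclideanSpace ℝ (Fin d))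
        * (Aeq.symm : EuclideanSpace ℝ (Fin d) →L[ℝ] EuclideanSpace ℝ (Fin d)) with hBinv
    have h₁ : Binv * B = 1 := by
      rw [hBinv, mul_assoc, ← huval]
      exact u.inv_mul
    have h₂ : B * Binv = 1 := by
      have hABu : B = A * (u : EuclideanSpace ℝ (Fin d) →L[ℝ] EuclideanSpace ℝ (Fin d)) := by
        rw [huval]
        refine ContinuousLinearMap.ext fun z => ?_
        simp only [ContinuousLinearMap.mul_apply, ContinuousLinearEquiv.coe_coe]
        rw [hcs (B z)]
      have e1 : B * (↑u⁻¹ : EuclideanSpace ℝ (Fin d) →L[ℝ] EuclideanSpace ℝ (Fin d)) = A := by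
        rw [hABu, mul_assoc, u.mul_inv, mul_one]
      have e2 : A * (Aeq.symm : EuclideanSpace ℝ (Fin d) →L[ℝ] EuclideanSpace ℝ (Fin d)) = 1 := by
        refine ContinuousLinearMap.ext fun z => ?_
        simp only [ContinuousLinearMap.mul_apply, ContinuousLinearMap.one_apply,
          ContinuousLinearEquiv.coe_coe]
        exact hcs z
      rw [hBinv, ← mul_assoc, e1, e2]
    set Beq : EuclideanSpace ℝ (Fin d) ≃L[ℝ] EuclideanSpace ℝ (Fin d) :=
      ContinuousLinearEquiv.equivOfInverse B Binv
        (fun z => by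
          have := ContinuousLinearMap.ext_iff.1 h₁ z
          simpa [ContinuousLinearMap.mul_apply] using this)
        (fun z => by
          have := ContinuousLinearMap.ext_iff.1 h₂ z
          simpa [ContinuousLinearMap.mul_apply] using this) with hBeqdef
    have hcoeBeq : (Beq : EuclideanSpace ℝ (Fin d) →L[ℝ] EuclideanSpace ℝ (Fin d)) = B := rfl
    have hasF : HasFDerivAt f (Beq : EuclideanSpace ℝ (Fin d) →L[ℝ]
        EuclideanSpace ℝ (Fin d)) x₀ := by
      rw [hcoeBeq]
      exact (hdiff x₀ hx₀Ω).hasFDerivAt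
    have cdg : ContDiffAt ℝ k (cdf.localInverse hasF hk1) (f x₀) :=
      cdf.to_localInverse hasF hk1
    have hstrict : HasStrictFDerivAt f (Beq : EuclideanSpace ℝ (Fin d) →L[ℝ]
        EuclideanSpace ℝ (Fin d)) x₀ := cdf.hasStrictFDerivAt' hasF hk1
    have hgdef : cdf.localInverse hasF hk1 = hstrict.localInverse f Beq x₀ := rfl
    have hev1 : ∀ᶠ z in nhds (f x₀), f (cdf.localInverse hasF hk1 z) = z := by
      rw [hgdef]
      exact hstrict.eventually_right_inverse
    have hgx₀ : cdf.localInverse hasF hk1 (f x₀) = x₀ := cdf.localInverse_apply_image hasF hk1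
    have hev2 : ∀ᶠ z in nhds (f x₀), cdf.localInverse hasF hk1 z ∈ Metric.ball a r₁ := by
      have hcont : ContinuousAt (cdf.localInverse hasF hk1) (f x₀) := by
        rw [hgdef]
        exact hstrict.localInverse_continuousAt
      have := hcont.preimage_mem_nhds (isOpen_ball.mem_nhds (by rw [hgx₀]; exact hx₀))
      filter_upwards [this] with z hz
      exact hz
    have hev3 : ∀ᶠ z in nhds (f x₀), z ∈ f '' Metric.ball a r₁ :=
      goal2.mem_nhds (mem_image_of_mem f hx₀)
    have heq : Function.invFunOn f (Metric.ball a r₁) =ᶠ[nhds (f x₀)] cdf.localInverse hasF hk1 := by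
      filter_upwards [hev1, hev2, hev3] with z h1 h2 h3
      have hex : ∃ w ∈ Metric.ball a r₁, f w = z := by
        obtain ⟨w, hw, hwz⟩ := h3
        exact ⟨w, hw, hwz⟩
      have hz1 : f (Function.invFunOn f (Metric.ball a r₁) z) = z :=
        Function.invFunOn_eq hex
      apply goal1 (Function.invFunOn_mem hex) h2
      rw [hz1, h1]
    exact (cdg.congr_of_eventuallyEq heq).contDiffWithinAt
end
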